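/- arXiv:2412.04579 — 3 statements merged into one kernel-verified Lean document; each statement's English description precedes it below -/
import Mathlib

section
/- Let n ≥ 1, let λ_1,…,λ_{2n} be distinct real numbers, let 0 ≤ a ≤ n, let A ⊆ {1,…,2n} with |A| = n, and let S ⊆ A with |S| = a. Then (−1)^{n−a} · Δ(A) Δ(A') = sgn(σ_A) · Σ_{B ⊆ {1,…,2n}, |B| = n, A ∩ B = S} sgn(σ_B) · Δ(B) Δ(B'), where A' and B' denote complements in {1,…,2n}. -/
open scoped BigOperators

/-- `Δ(A)`: the Vandermonde product `∏_{i,j ∈ A, i<j} (λ_j − λ_i)`. -/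
def vdm {N : ℕ} (lam : Fin N → ℝ) (A : Finset (Fin N)) : ℝ :=
  ∏ p ∈ (A ×ˢ A).filter fun p => p.1 < p.2, (lam p.2 - lam p.1)

/-- the `a`-th smallest element (0-based) of a finite set of indices, with default `d`. -/
def kth {N : ℕ} (A : Finset (Fin N)) (d : Fin N) (a : ℕ) : Fin N :=
  (A.sort (· ≤ ·)).getD a d

/-- The map underlying the permutation `σ_A` of `{1,…,2n}`: it sends `i` to the `i`-th
smallest element of `A` and `n+i` to the `i`-th smallest element of `Aᶜ` (0-based). -/
def sigmaSet (n : ℕ) (A : Finset (Fin (2 * n))) : Fin (2 * n) → Fin (2 * n) :=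
  fun k => if k.val < n then kth A k k.val else kth Aᶜ k (k.val - n)

/-- The sign of a self-map of `Fin N`, as `(−1)` to the number of inversions; for a
permutation this is the usual sign `sgn`. -/
def invSign {N : ℕ} (f : Fin N → Fin N) : ℝ :=
  (-1 : ℝ) ^ ((Finset.univ.filter fun p : Fin N × Fin N => p.1 < p.2 ∧ f p.2 < f p.1).card)

open Finset Matrix

open Finset Equiv Equiv.Perm in
lemma signAux_eq_sign {N : ℕ} (σ : Equiv.Perm (Fin N)) :
    Equiv.Perm.signAux σ = Equiv.Perm.sign σ := by
  refine Equiv.Perm.swap_induction_on σ (by simp [Equiv.Perm.signAux_one]) ?_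
  intro f x y hxy ih
  rw [Equiv.Perm.signAux_mul, Equiv.Perm.signAux_swap hxy, ih, Equiv.Perm.sign_mul,
    Equiv.Perm.sign_swap hxy]

open Finset in
lemma invSign_eq_sign {N : ℕ} (σ : Equiv.Perm (Fin N)) :
    invSign ⇑σ = ((Equiv.Perm.sign σ : ℤ) : ℝ) := by
  rw [← signAux_eq_sign]
  unfold Equiv.Perm.signAux invSign
  rw [Finset.prod_ite, Finset.prod_const, Finset.prod_const, one_pow, mul_one]
  have hcard : ((Equiv.Perm.finPairsLT N).filter fun x => σ x.1 ≤ σ x.2).card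
      = ((Finset.univ.filter fun p : Fin N × Fin N => p.1 < p.2 ∧ σ p.2 < σ p.1)).card := by
    refine Finset.card_bij (fun x _ => (x.2, x.1)) ?_ ?_ ?_
    · rintro ⟨a, b⟩ hx
      simp only [mem_filter, Equiv.Perm.mem_finPairsLT] at hx ⊢
      refine ⟨Finset.mem_univ _, hx.1, ?_⟩
      rcases lt_or_eq_of_le hx.2 with h | h
      · exact h
      · exact absurd (σ.injective h) (ne_of_gt hx.1)
    · rintro ⟨a, b⟩ ha ⟨c, d⟩ hc h
      simp only [Prod.mk.injEq] at h
      obtain ⟨rfl, rfl⟩ := h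
      rfl
    · rintro ⟨a, b⟩ hab
      simp only [mem_filter, mem_univ, true_and] at hab
      exact ⟨⟨b, a⟩, by simp [Equiv.Perm.mem_finPairsLT, hab.1, le_of_lt hab.2], rfl⟩
  rw [hcard]
  push_cast
  norm_num


lemma prod_pairs_fin {m : ℕ} (g : Fin m → Fin m → ℝ) :
    ∏ p ∈ (Finset.univ ×ˢ Finset.univ).filter (fun p : Fin m × Fin m => p.1 < p.2), g p.1 p.2
      = ∏ i, ∏ j ∈ Finset.Ioi i, g i j := by
  rw [Finset.prod_filter, Finset.prod_product]
  refine Finset.prod_congr rfl fun i _ => ?_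
  rw [← Finset.prod_filter]
  congr 1
  ext j
  simp [Finset.mem_Ioi]

lemma vdm_eq_det {N m : ℕ} (lam : Fin N → ℝ) (B : Finset (Fin N)) (h : B.card = m) :
    vdm lam B = (Matrix.vandermonde fun i : Fin m => lam (B.orderEmbOfFin h i)).det := by
  rw [Matrix.det_vandermonde, ← prod_pairs_fin (fun i j => lam (B.orderEmbOfFin h j) - lam (B.orderEmbOfFin h i))]
  unfold vdm
  refine (Finset.prod_bij (fun p _ => (B.orderEmbOfFin h p.1, B.orderEmbOfFin h p.2)) ?_ ?_ ?_ ?_).symm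
  · rintro ⟨i, j⟩ hp
    simp only [Finset.mem_filter, Finset.mem_product, Finset.mem_univ, true_and] at hp ⊢
    exact ⟨⟨Finset.orderEmbOfFin_mem _ _ _, Finset.orderEmbOfFin_mem _ _ _⟩,
      (B.orderEmbOfFin h).strictMono hp⟩
  · rintro ⟨i, j⟩ _ ⟨i', j'⟩ _ hh
    simp only [Prod.mk.injEq, (B.orderEmbOfFin h).injective.eq_iff] at hh
    simp [Prod.ext_iff, hh.1, hh.2]
  · rintro ⟨x, y⟩ hq
    simp only [Finset.mem_filter, Finset.mem_product] at hq
    have hx : x ∈ Set.range (B.orderEmbOfFin h) := by rw [Finset.range_orderEmbOfFin]; exact hq.1.1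
    have hy : y ∈ Set.range (B.orderEmbOfFin h) := by rw [Finset.range_orderEmbOfFin]; exact hq.1.2
    obtain ⟨i, rfl⟩ := hx
    obtain ⟨j, rfl⟩ := hy
    refine ⟨(i, j), ?_, rfl⟩
    simp only [Finset.mem_filter, Finset.mem_product, Finset.mem_univ, true_and]
    exact (B.orderEmbOfFin h).lt_iff_lt.mp hq.2
  · rintro ⟨i, j⟩ _; rfl


lemma kth_eq {N m : ℕ} (B : Finset (Fin N)) (h : B.card = m) (d : Fin N) {i : ℕ} (hi : i < m) :
    kth B d i = B.orderEmbOfFin h ⟨i, hi⟩ := by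
  unfold kth
  rw [Finset.orderEmbOfFin_apply]
  exact List.getD_eq_getElem _ _ (by rw [Finset.length_sort, h]; exact hi)

lemma card_compl_eq {n : ℕ} (B : Finset (Fin (2 * n))) (hB : B.card = n) : Bᶜ.card = n := by
  rw [Finset.card_compl, hB, Fintype.card_fin]; omega

lemma sigmaSet_lt {n : ℕ} {B : Finset (Fin (2 * n))} (hB : B.card = n) {k : Fin (2 * n)}
    (h : k.val < n) : sigmaSet n B k = B.orderEmbOfFin hB ⟨k.val, h⟩ := by
  unfold sigmaSet
  rw [if_pos h, kth_eq B hB]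

lemma sigmaSet_ge {n : ℕ} {B : Finset (Fin (2 * n))} (hB : B.card = n) {k : Fin (2 * n)}
    (h : ¬ k.val < n) : sigmaSet n B k = Bᶜ.orderEmbOfFin (card_compl_eq B hB)
      ⟨k.val - n, by have := k.isLt; omega⟩ := by
  unfold sigmaSet
  rw [if_neg h, kth_eq Bᶜ (card_compl_eq B hB)]

lemma sigmaSet_bijective {n : ℕ} {B : Finset (Fin (2 * n))} (hB : B.card = n) :
    Function.Bijective (sigmaSet n B) := by
  rw [Fintype.bijective_iff_injective_and_card]
  refine ⟨fun k l hkl => ?_, rfl⟩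
  by_cases hk : k.val < n <;> by_cases hl : l.val < n
  · rw [sigmaSet_lt hB hk, sigmaSet_lt hB hl] at hkl
    have h1 := (B.orderEmbOfFin hB).injective hkl
    exact Fin.ext (by simpa using congrArg Fin.val h1)
  · rw [sigmaSet_lt hB hk, sigmaSet_ge hB hl] at hkl
    have h1 := Finset.orderEmbOfFin_mem B hB ⟨k.val, hk⟩
    have h2 := Finset.orderEmbOfFin_mem Bᶜ (card_compl_eq B hB) ⟨l.val - n, by have := l.isLt; omega⟩
    rw [hkl] at h1
    exact absurd h1 (Finset.mem_compl.mp h2)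
  · rw [sigmaSet_ge hB hk, sigmaSet_lt hB hl] at hkl
    have h1 := Finset.orderEmbOfFin_mem B hB ⟨l.val, hl⟩
    have h2 := Finset.orderEmbOfFin_mem Bᶜ (card_compl_eq B hB) ⟨k.val - n, by have := k.isLt; omega⟩
    rw [← hkl] at h1
    exact absurd h1 (Finset.mem_compl.mp h2)
  · rw [sigmaSet_ge hB hk, sigmaSet_ge hB hl] at hkl
    have := (Bᶜ.orderEmbOfFin (card_compl_eq B hB)).injective hkl
    have := congrArg Fin.val this
    simp only at this
    exact Fin.ext (by omega)

/-- σ_B as a permutation -/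
noncomputable def sigmaPerm {n : ℕ} {B : Finset (Fin (2 * n))} (hB : B.card = n) :
    Equiv.Perm (Fin (2 * n)) := Equiv.ofBijective _ (sigmaSet_bijective hB)

lemma sigmaPerm_coe {n : ℕ} {B : Finset (Fin (2 * n))} (hB : B.card = n) :
    ⇑(sigmaPerm hB) = sigmaSet n B := rfl

lemma sigmaSet_mem {n : ℕ} {B : Finset (Fin (2 * n))} (hB : B.card = n) {k : Fin (2 * n)} :
    sigmaSet n B k ∈ B ↔ k.val < n := by
  by_cases h : k.val < n
  · rw [sigmaSet_lt hB h]
    simp only [h, iff_true]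
    exact Finset.orderEmbOfFin_mem B hB _
  · rw [sigmaSet_ge hB h]
    simp only [h, iff_false]
    exact Finset.mem_compl.mp (Finset.orderEmbOfFin_mem Bᶜ _ _)


variable {N : ℕ}

/-- row of type "i ∈ B" -/
def rowIn (n : ℕ) (lam : Fin N → ℝ) (i : Fin N) : Fin N → ℝ :=
  fun j => if j.val < n then lam i ^ j.val else 0
/-- row of type "i ∉ B" -/
def rowOut (n : ℕ) (lam : Fin N → ℝ) (i : Fin N) : Fin N → ℝ :=
  fun j => if j.val < n then 0 else lam i ^ (j.val - n)

def NB (n : ℕ) (lam : Fin N → ℝ) (B : Finset (Fin N)) : Matrix (Fin N) (Fin N) ℝ :=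
  Matrix.of fun i => if i ∈ B then rowIn n lam i else rowOut n lam i

/-- lower half of Fin (2n) -/
def eLow (n : ℕ) : Fin n ≃ {i : Fin (2 * n) // i.val < n} where
  toFun i := ⟨⟨i.val, by omega⟩, i.isLt⟩
  invFun i := ⟨i.val.val, i.2⟩
  left_inv i := rfl
  right_inv i := rfl

def eHigh (n : ℕ) : Fin n ≃ {i : Fin (2 * n) // ¬ i.val < n} where
  toFun i := ⟨⟨i.val + n, by omega⟩, by simp⟩
  invFun i := ⟨i.val.val - n, by have := i.1.isLt; have := i.2; omega⟩
  left_inv i := by ext; simp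
  right_inv i := by ext; have := i.2; simp; omega

lemma det_NB {n : ℕ} (lam : Fin (2 * n) → ℝ) (B : Finset (Fin (2 * n))) (hB : B.card = n) :
    (NB n lam B).det = invSign (sigmaSet n B) * (vdm lam B * vdm lam Bᶜ) := by
  classical
  set σ := sigmaPerm hB with hσ
  have hperm : ((NB n lam B).submatrix σ id).det
      = ((Equiv.Perm.sign σ : ℤ) : ℝ) * (NB n lam B).det := by
    rw [Matrix.det_permute]
  set M' := (NB n lam B).submatrix σ id with hM'
  have htri : M'.det = (M'.toSquareBlockProp fun i => i.val < n).det *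
      (M'.toSquareBlockProp fun i => ¬ i.val < n).det := by
    refine Matrix.twoBlockTriangular_det M' (fun i => i.val < n) ?_
    intro i hi j hj
    have hmem : σ i ∉ B := fun hmem => hi ((sigmaSet_mem hB).mp hmem)
    simp only [hM', Matrix.submatrix_apply, id_eq, NB, Matrix.of_apply, if_neg hmem, rowOut]
    rw [if_pos hj]
  have hb1 : (M'.toSquareBlockProp fun i => i.val < n).det = vdm lam B := by
    rw [← Matrix.det_submatrix_equiv_self (eLow n), vdm_eq_det lam B hB]
    congr 1
    ext i j
    have hlt : ((eLow n i : {i : Fin (2*n) // i.val < n}) : Fin (2*n)).val < n := i.isLt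
    have hmem : σ ((eLow n i) : Fin (2 * n)) ∈ B := by
      rw [hσ, sigmaPerm_coe, sigmaSet_mem hB]; exact i.isLt
    have hval : σ ((eLow n i) : Fin (2 * n)) = B.orderEmbOfFin hB i := by
      rw [hσ, sigmaPerm_coe, sigmaSet_lt hB hlt]
      exact congrArg _ (Fin.ext rfl)
    have hjlt : ((eLow n j : {i : Fin (2*n) // i.val < n}) : Fin (2*n)).val < n := j.isLt
    show M' ((eLow n i) : Fin (2*n)) ((eLow n j) : Fin (2*n)) = _
    have hent : M' ((eLow n i) : Fin (2*n)) ((eLow n j) : Fin (2*n))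
        = lam (σ ((eLow n i) : Fin (2*n))) ^ (((eLow n j) : Fin (2*n)).val) := by
      simp only [hM', Matrix.submatrix_apply, id_eq, NB, Matrix.of_apply, if_pos hmem, rowIn]
      rw [if_pos hjlt]
    rw [hent, hval]
    rfl
  have hb2 : (M'.toSquareBlockProp fun i => ¬ i.val < n).det = vdm lam Bᶜ := by
    rw [← Matrix.det_submatrix_equiv_self (eHigh n), vdm_eq_det lam Bᶜ (card_compl_eq B hB)]
    congr 1
    ext i j
    have hge : ¬ ((eHigh n i : {i : Fin (2*n) // ¬ i.val < n}) : Fin (2*n)).val < n := by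
      simp [eHigh]
    have hmem : σ ((eHigh n i) : Fin (2 * n)) ∉ B := fun h => hge ((sigmaSet_mem hB).mp h)
    have hval : σ ((eHigh n i) : Fin (2 * n)) = Bᶜ.orderEmbOfFin (card_compl_eq B hB) i := by
      rw [hσ, sigmaPerm_coe, sigmaSet_ge hB hge]
      refine congrArg _ (Fin.ext ?_)
      show ((eHigh n i : {i : Fin (2*n) // ¬ i.val < n}) : Fin (2*n)).val - n = i.val
      simp [eHigh]
    show M' ((eHigh n i) : Fin (2*n)) ((eHigh n j) : Fin (2*n)) = _
    simp only [hM', Matrix.submatrix_apply, id_eq, NB, Matrix.of_apply, if_neg hmem, rowOut]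
    have hjge : ¬ ((eHigh n j : {i : Fin (2*n) // ¬ i.val < n}) : Fin (2*n)).val < n := by
      simp [eHigh]
    rw [if_neg hjge]
    show lam _ ^ (((eHigh n j : {i : Fin (2*n) // ¬ i.val < n}) : Fin (2*n)).val - n) = _
    have : ((eHigh n j : {i : Fin (2*n) // ¬ i.val < n}) : Fin (2*n)).val - n = j.val := by
      simp [eHigh]
    rw [this, hval]
    rfl
  have hsign : invSign (sigmaSet n B) = ((Equiv.Perm.sign σ : ℤ) : ℝ) := by
    rw [← sigmaPerm_coe hB, ← hσ, invSign_eq_sign]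
  have hsq : ((Equiv.Perm.sign σ : ℤ) : ℝ) * ((Equiv.Perm.sign σ : ℤ) : ℝ) = 1 := by
    rcases Int.units_eq_one_or (Equiv.Perm.sign σ) with h | h <;> rw [h] <;> norm_num
  have := hperm
  rw [htri, hb1, hb2] at this
  rw [hsign]
  linear_combination (-((Equiv.Perm.sign σ : ℤ) : ℝ)) * this - (NB n lam B).det * hsq


lemma det_eq_zero_of_supported {N : ℕ} (M : Matrix (Fin N) (Fin N) ℝ) (J C : Finset (Fin N))
    (hcard : C.card < J.card) (h : ∀ j ∈ J, ∀ i, i ∉ C → M i j = 0) : M.det = 0 := by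
  classical
  have hnotli : ¬ LinearIndependent ℝ (fun j : J => (fun c : C => M c.val j.val)) := by
    intro hli
    have h1 := hli.fintype_card_le_finrank
    rw [Module.finrank_fintype_fun_eq_card] at h1
    simp only [Fintype.card_coe] at h1
    omega
  obtain ⟨g, hsum, j0, hj0⟩ := Fintype.not_linearIndependent_iff.mp hnotli
  have hv : ∃ v ≠ 0, M *ᵥ v = 0 := by
    refine ⟨fun j => if h : j ∈ J then g ⟨j, h⟩ else 0, ?_, ?_⟩
    · intro hv0
      have := congrFun hv0 j0.val
      rw [dif_pos j0.2] at this
      exact hj0 (by simpa using this)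
    · funext i
      show (∑ j, M i j * _) = 0
      have hsplit : ∀ j : Fin N, M i j * (if h : j ∈ J then g ⟨j, h⟩ else 0)
          = if h : j ∈ J then g ⟨j, h⟩ * M i j else 0 := by
        intro j; split <;> simp [mul_comm]
      simp_rw [hsplit]
      rw [← Finset.sum_subset (Finset.subset_univ J) (fun x _ hx => dif_neg hx),
        ← Finset.sum_attach J (fun x => if h : x ∈ J then g ⟨x, h⟩ * M i x else 0)]
      have hterm : ∀ x : {y // y ∈ J}, (if h : (x : Fin N) ∈ J then g ⟨x, h⟩ * M i x else 0)
          = g x * M i x := by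
        intro x
        rw [dif_pos x.2, Subtype.coe_eta]
      rw [Finset.sum_congr rfl (fun x _ => hterm x)]
      by_cases hiC : i ∈ C
      · have h2 := congrFun hsum ⟨i, hiC⟩
        simp only [Finset.sum_apply, Pi.smul_apply, smul_eq_mul, Pi.zero_apply] at h2
        rw [← h2]
        rfl
      · refine Finset.sum_eq_zero fun x _ => ?_
        rw [h x x.2 i hiC, mul_zero]
  exact Matrix.exists_mulVec_eq_zero_iff.mp hv

lemma card_low (n : ℕ) : (Finset.univ.filter fun j : Fin (2 * n) => j.val < n).card = n := by
  have : (Finset.univ.filter fun j : Fin (2 * n) => j.val < n)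
      = Finset.univ.map (Fin.castLEEmb (show n ≤ 2 * n by omega)) := by
    ext k
    simp only [Finset.mem_filter, Finset.mem_univ, true_and, Finset.mem_map]
    constructor
    · intro hk
      exact ⟨⟨k.val, hk⟩, by simp [Fin.castLEEmb, Fin.ext_iff]⟩
    · rintro ⟨i, -, rfl⟩
      simpa [Fin.castLEEmb] using i.isLt
  rw [this, Finset.card_map, Finset.card_univ, Fintype.card_fin]

lemma card_high (n : ℕ) : (Finset.univ.filter fun j : Fin (2 * n) => ¬ j.val < n).card = n := by
  have h := Finset.card_filter_add_card_filter_not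
    (s := (Finset.univ : Finset (Fin (2 * n)))) (p := fun j => j.val < n)
  rw [card_low n, Finset.card_univ, Fintype.card_fin] at h
  omega

lemma det_NB_ne {n : ℕ} (lam : Fin (2 * n) → ℝ) (B : Finset (Fin (2 * n)))
    (hB : B.card ≠ n) : (NB n lam B).det = 0 := by
  classical
  have hBle : B.card ≤ 2 * n := by
    have := Finset.card_le_univ B; simpa using this
  rcases lt_or_gt_of_ne hB with hlt | hgt
  · refine det_eq_zero_of_supported _ (Finset.univ.filter fun j : Fin (2 * n) => j.val < n) B
      ?_ ?_
    · rw [card_low]; exact hlt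
    · intro j hj i hi
      simp only [Finset.mem_filter] at hj
      simp only [NB, Matrix.of_apply, if_neg hi, rowOut, if_pos hj.2]
  · refine det_eq_zero_of_supported _ (Finset.univ.filter fun j : Fin (2 * n) => ¬ j.val < n) Bᶜ
      ?_ ?_
    · rw [card_high, Finset.card_compl, Fintype.card_fin]; omega
    · intro j hj i hi
      simp only [Finset.mem_filter] at hj
      rw [Finset.mem_compl, not_not] at hi
      simp only [NB, Matrix.of_apply, if_pos hi, rowIn, if_neg hj.2]


variable {N : ℕ}

/-- the matrix whose determinant is the sum over B with A ∩ B = S -/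
def MS (n : ℕ) (lam : Fin N → ℝ) (A S : Finset (Fin N)) : Matrix (Fin N) (Fin N) ℝ :=
  Matrix.of fun i j => if j.val < n then (if i ∈ A ∧ i ∉ S then 0 else lam i ^ j.val)
    else (if i ∈ S then 0 else lam i ^ (j.val - n))

def TT (A S : Finset (Fin N)) : Fin N → Finset Bool :=
  fun i => if i ∈ S then {true} else if i ∈ A then {false} else {true, false}

lemma MS_row (n : ℕ) (lam : Fin N → ℝ) (A S : Finset (Fin N)) (hSA : S ⊆ A) (i : Fin N) :
    (fun j => MS n lam A S i j)
      = ∑ b ∈ TT A S i, (if b then rowIn n lam i else rowOut n lam i) := by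
  classical
  funext j
  by_cases hiS : i ∈ S
  · simp only [TT, if_pos hiS, Finset.sum_singleton, if_pos, MS, Matrix.of_apply, rowIn]
    by_cases hj : j.val < n
    · rw [if_pos hj, if_pos hj, if_neg (by tauto)]
    · rw [if_neg hj, if_neg hj]
  · by_cases hiA : i ∈ A
    · simp only [TT, if_neg hiS, if_pos hiA, Finset.sum_singleton, Bool.false_eq_true, if_false,
        MS, Matrix.of_apply, rowOut]
      by_cases hj : j.val < n
      · rw [if_pos hj, if_pos hj, if_pos ⟨hiA, hiS⟩]
      · rw [if_neg hj, if_neg hj]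
    · have : TT A S i = {true, false} := by simp [TT, hiS, hiA]
      rw [this]
      rw [Finset.sum_pair (by simp)]
      simp only [if_pos, Bool.false_eq_true, if_false, MS, Matrix.of_apply, rowIn, rowOut,
        Pi.add_apply]
      by_cases hj : j.val < n
      · rw [if_pos hj, if_pos hj, if_pos hj, if_neg (by tauto), add_zero]
      · rw [if_neg hj, if_neg hj, if_neg hj, if_neg hiS, zero_add]

lemma det_MS_expand (n : ℕ) (lam : Fin N → ℝ) (A S : Finset (Fin N)) (hSA : S ⊆ A) :
    (MS n lam A S).det
      = ∑ r ∈ Fintype.piFinset (TT A S),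
          (NB n lam (Finset.univ.filter fun i => r i = true)).det := by
  classical
  have h1 : (MS n lam A S).det
      = ∑ r ∈ Fintype.piFinset (TT A S),
          (Matrix.of fun i => (if r i then rowIn n lam i else rowOut n lam i)).det := by
    have h0 : MS n lam A S
        = Matrix.of fun i => ∑ b ∈ TT A S i, (if b then rowIn n lam i else rowOut n lam i) := by
      ext i j
      have := congrFun (MS_row n lam A S hSA i) j
      simpa using this
    rw [h0]
    exact (Matrix.detRowAlternating.toMultilinearMap).map_sum_finset
      (fun i b => if b then rowIn n lam i else rowOut n lam i) (TT A S)
  rw [h1]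
  refine Finset.sum_congr rfl fun r _ => ?_
  congr 1
  ext i j
  by_cases h : r i = true
  · simp [NB, h]
  · simp [NB, h]

lemma det_MS_sum (n : ℕ) (lam : Fin N → ℝ) (A S : Finset (Fin N)) (hSA : S ⊆ A) :
    (MS n lam A S).det
      = ∑ B ∈ (Finset.univ : Finset (Finset (Fin N))).filter (fun B => A ∩ B = S),
          (NB n lam B).det := by
  classical
  rw [det_MS_expand n lam A S hSA]
  refine Finset.sum_nbij' (i := fun r => Finset.univ.filter fun i => r i = true)
    (j := fun B => fun i => decide (i ∈ B)) ?_ ?_ ?_ ?_ ?_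
  · intro r hr
    rw [Fintype.mem_piFinset] at hr
    simp only [Finset.mem_filter, Finset.mem_univ, true_and]
    ext x
    simp only [Finset.mem_inter, Finset.mem_filter, Finset.mem_univ, true_and]
    constructor
    · rintro ⟨hxA, hxr⟩
      by_contra hxS
      have := hr x
      rw [TT, if_neg hxS, if_pos hxA, Finset.mem_singleton] at this
      rw [this] at hxr
      exact Bool.false_ne_true hxr
    · intro hxS
      refine ⟨hSA hxS, ?_⟩
      have := hr x
      rwa [TT, if_pos hxS, Finset.mem_singleton] at this
  · intro B hB
    rw [Finset.mem_filter] at hB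
    rw [Fintype.mem_piFinset]
    intro x
    rw [TT]
    by_cases hxS : x ∈ S
    · rw [if_pos hxS, Finset.mem_singleton]
      have : x ∈ A ∩ B := hB.2 ▸ hxS
      simp [Finset.mem_inter.mp this]
    · rw [if_neg hxS]
      by_cases hxA : x ∈ A
      · rw [if_pos hxA, Finset.mem_singleton]
        have : x ∉ B := fun hxB => hxS (hB.2 ▸ Finset.mem_inter.mpr ⟨hxA, hxB⟩)
        simp [this]
      · rw [if_neg hxA]
        by_cases hxB : x ∈ B <;> simp [hxB]
  · intro r _
    funext i
    simp
  · intro B _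
    ext x
    simp
  · intro r _
    rfl


def U1 (n : ℕ) : Matrix (Fin (2 * n)) (Fin (2 * n)) ℝ :=
  Matrix.of fun k j => (if k = j then (1:ℝ) else 0) + (if k.val = j.val + n then -1 else 0)

def U2mat (n : ℕ) : Matrix (Fin (2 * n)) (Fin (2 * n)) ℝ :=
  Matrix.of fun k j => (if k = j then (1:ℝ) else 0) + (if j.val = k.val + n then 1 else 0)

lemma det_U1 {n : ℕ} (hn : 1 ≤ n) : (U1 n).det = 1 := by
  have htri : (U1 n).BlockTriangular OrderDual.toDual := by
    intro i j hij
    have hij' : (i : Fin (2*n)) < j := hij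
    have h1 : ¬ (i = j) := ne_of_lt hij'
    have h2 : ¬ (i.val = j.val + n) := by have := Fin.lt_iff_val_lt_val.mp hij'; omega
    simp only [U1, Matrix.of_apply]
    rw [if_neg h1, if_neg h2]
    ring
  rw [Matrix.det_of_lowerTriangular _ htri]
  refine Finset.prod_eq_one fun i _ => ?_
  have h2 : ¬ (i.val = i.val + n) := by omega
  simp only [U1, Matrix.of_apply]
  rw [if_neg h2]
  simp

lemma det_U2 {n : ℕ} (hn : 1 ≤ n) : (U2mat n).det = 1 := by
  have htri : (U2mat n).BlockTriangular id := by
    intro i j hij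
    have hij' : (j : Fin (2*n)) < i := hij
    have h1 : ¬ (i = j) := (ne_of_lt hij').symm
    have h2 : ¬ (j.val = i.val + n) := by have := Fin.lt_iff_val_lt_val.mp hij'; omega
    simp only [U2mat, Matrix.of_apply]
    rw [if_neg h1, if_neg h2]
    ring
  rw [Matrix.det_of_upperTriangular htri]
  refine Finset.prod_eq_one fun i _ => ?_
  have h2 : ¬ (i.val = i.val + n) := by omega
  simp only [U2mat, Matrix.of_apply]
  rw [if_neg h2]
  simp

lemma mul_U1 {n : ℕ} (X : Matrix (Fin (2 * n)) (Fin (2 * n)) ℝ) (i j : Fin (2 * n)) :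
    (X * U1 n) i j = X i j - (if h : j.val < n then X i ⟨j.val + n, by omega⟩ else 0) := by
  rw [Matrix.mul_apply]
  simp only [U1, Matrix.of_apply, mul_add]
  rw [Finset.sum_add_distrib]
  have h1 : (∑ k, X i k * if k = j then (1:ℝ) else 0) = X i j := by
    simp [mul_ite]
  rw [h1]
  by_cases hj : j.val < n
  · have h2 : (∑ k, X i k * if k.val = j.val + n then (-1:ℝ) else 0)
        = -(X i ⟨j.val + n, by omega⟩) := by
      rw [Finset.sum_eq_single (⟨j.val + n, by omega⟩ : Fin (2 * n))]
      · rw [if_pos rfl]; ring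
      · intro k _ hk
        have hne : ¬ (k.val = j.val + n) := by
          intro h
          exact hk (Fin.ext (by simpa using h))
        rw [if_neg hne, mul_zero]
      · intro h; exact absurd (Finset.mem_univ _) h
    rw [h2, dif_pos hj]
    ring
  · have h2 : (∑ k, X i k * if k.val = j.val + n then (-1:ℝ) else 0) = 0 := by
      refine Finset.sum_eq_zero fun k _ => ?_
      have hne : ¬ (k.val = j.val + n) := by have := k.isLt; omega
      rw [if_neg hne, mul_zero]
    rw [h2, dif_neg hj]
    ring

lemma mul_U2 {n : ℕ} (X : Matrix (Fin (2 * n)) (Fin (2 * n)) ℝ) (i j : Fin (2 * n)) :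
    (X * U2mat n) i j = X i j + (if h : n ≤ j.val then X i ⟨j.val - n, by omega⟩ else 0) := by
  rw [Matrix.mul_apply]
  simp only [U2mat, Matrix.of_apply, mul_add]
  rw [Finset.sum_add_distrib]
  have h1 : (∑ k, X i k * if k = j then (1:ℝ) else 0) = X i j := by
    simp [mul_ite]
  rw [h1]
  by_cases hj : n ≤ j.val
  · have h2 : (∑ k, X i k * if j.val = k.val + n then (1:ℝ) else 0)
        = X i ⟨j.val - n, by omega⟩ := by
      rw [Finset.sum_eq_single (⟨j.val - n, by omega⟩ : Fin (2 * n))]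
      · have : j.val = (⟨j.val - n, by omega⟩ : Fin (2 * n)).val + n := by
          show j.val = j.val - n + n
          omega
        rw [if_pos this]; ring
      · intro k _ hk
        have hne : ¬ (j.val = k.val + n) := by
          intro h
          refine hk (Fin.ext ?_)
          show k.val = j.val - n
          omega
        rw [if_neg hne, mul_zero]
      · intro h; exact absurd (Finset.mem_univ _) h
    rw [h2, dif_pos hj]
  · have h2 : (∑ k, X i k * if j.val = k.val + n then (1:ℝ) else 0) = 0 := by
      refine Finset.sum_eq_zero fun k _ => ?_
      have hne : ¬ (j.val = k.val + n) := by omega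
      rw [if_neg hne, mul_zero]
    rw [h2, dif_neg hj]

/-- the matrix after column operations -/
def PS (n : ℕ) (lam : Fin (2*n) → ℝ) (A S : Finset (Fin (2*n))) :
    Matrix (Fin (2*n)) (Fin (2*n)) ℝ :=
  Matrix.of fun i j => if j.val < n then
      (if i ∈ A then (if i ∈ S then lam i ^ j.val else -(lam i ^ j.val)) else 0)
    else (if i ∈ A ∧ i ∉ S then 0 else lam i ^ (j.val - n))

lemma MS_mul_eq_PS {n : ℕ} (lam : Fin (2*n) → ℝ) (A S : Finset (Fin (2*n))) (hSA : S ⊆ A) :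
    MS n lam A S * U1 n * U2mat n = PS n lam A S := by
  ext i j
  rw [mul_U2, mul_U1]
  by_cases hj : j.val < n
  · have e1 : ¬ n ≤ j.val := by omega
    rw [dif_neg e1, add_zero, dif_pos hj]
    have hv : ((⟨j.val + n, by omega⟩ : Fin (2*n))).val = j.val + n := rfl
    simp only [MS, PS, Matrix.of_apply, hv]
    have e2 : ¬ (j.val + n < n) := by omega
    rw [if_pos hj, if_neg e2, if_pos hj]
    have hpow : j.val + n - n = j.val := by omega
    rw [hpow]
    by_cases hiS : i ∈ S
    · rw [if_neg (by tauto), if_pos hiS, if_pos (hSA hiS), if_pos hiS]; ring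
    · by_cases hiA : i ∈ A
      · rw [if_pos ⟨hiA, hiS⟩, if_neg hiS, if_pos hiA, if_neg hiS]; ring
      · rw [if_neg (by tauto), if_neg hiS, if_neg hiA]; ring
  · have e2 : n ≤ j.val := by omega
    rw [dif_neg hj, sub_zero, dif_pos e2, mul_U1]
    have hlt : ((⟨j.val - n, by omega⟩ : Fin (2*n))).val < n := by
      show j.val - n < n
      have := j.isLt; omega
    rw [dif_pos hlt]
    have hjeq : (⟨((⟨j.val - n, by omega⟩ : Fin (2*n))).val + n, by omega⟩ : Fin (2*n)) = j := by
      refine Fin.ext ?_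
      show j.val - n + n = j.val
      omega
    rw [hjeq]
    have hv : ((⟨j.val - n, by omega⟩ : Fin (2*n))).val = j.val - n := rfl
    simp only [MS, PS, Matrix.of_apply, hv]
    have hlt2 : j.val - n < n := by have := j.isLt; omega
    rw [if_neg hj, if_pos hlt2, if_neg hj]
    ring


lemma count_S {n : ℕ} {A S : Finset (Fin (2*n))} (hA : A.card = n) (hSA : S ⊆ A) :
    (Finset.univ.filter fun i : Fin n => A.orderEmbOfFin hA i ∈ S).card = S.card := by
  refine Finset.card_bij (fun i _ => A.orderEmbOfFin hA i) ?_ ?_ ?_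
  · intro i hi
    exact (Finset.mem_filter.mp hi).2
  · intro i _ i' _ h
    exact (A.orderEmbOfFin hA).injective h
  · intro x hx
    have hxA : x ∈ A := hSA hx
    have : x ∈ Set.range (A.orderEmbOfFin hA) := by
      rw [Finset.range_orderEmbOfFin]; exact hxA
    obtain ⟨i, rfl⟩ := this
    exact ⟨i, Finset.mem_filter.mpr ⟨Finset.mem_univ _, hx⟩, rfl⟩

lemma prod_eps {n : ℕ} {A S : Finset (Fin (2*n))} (hA : A.card = n) (hSA : S ⊆ A) :
    (∏ i : Fin n, if A.orderEmbOfFin hA i ∈ S then (1:ℝ) else -1)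
      = (-1) ^ (n - S.card) := by
  rw [Finset.prod_ite, Finset.prod_const, Finset.prod_const, one_pow, one_mul]
  congr 1
  have h1 := Finset.card_filter_add_card_filter_not
    (s := (Finset.univ : Finset (Fin n))) (p := fun i => A.orderEmbOfFin hA i ∈ S)
  rw [count_S hA hSA, Finset.card_univ, Fintype.card_fin] at h1
  omega

lemma det_PS {n : ℕ} (lam : Fin (2*n) → ℝ) (A S : Finset (Fin (2*n)))
    (hA : A.card = n) (hSA : S ⊆ A) :
    (PS n lam A S).det = invSign (sigmaSet n A) *
      ((-1) ^ (n - S.card) * (vdm lam A * vdm lam Aᶜ)) := by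
  classical
  set σ := sigmaPerm hA with hσ
  have hperm : ((PS n lam A S).submatrix σ id).det
      = ((Equiv.Perm.sign σ : ℤ) : ℝ) * (PS n lam A S).det := by
    rw [Matrix.det_permute]
  set M' := (PS n lam A S).submatrix σ id with hM'
  have htri : M'.det = (M'.toSquareBlockProp fun i => i.val < n).det *
      (M'.toSquareBlockProp fun i => ¬ i.val < n).det := by
    refine Matrix.twoBlockTriangular_det M' (fun i => i.val < n) ?_
    intro i hi j hj
    have hmem : σ i ∉ A := fun hmem => hi ((sigmaSet_mem hA).mp hmem)
    simp only [hM', Matrix.submatrix_apply, id_eq, PS, Matrix.of_apply]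
    rw [if_pos hj, if_neg hmem]
  have hb1 : (M'.toSquareBlockProp fun i => i.val < n).det
      = (-1) ^ (n - S.card) * vdm lam A := by
    rw [← Matrix.det_submatrix_equiv_self (eLow n)]
    have heq : ((M'.toSquareBlockProp fun i => i.val < n).submatrix (eLow n) (eLow n))
        = Matrix.of fun i j => (if A.orderEmbOfFin hA i ∈ S then (1:ℝ) else -1) *
            (Matrix.vandermonde fun i : Fin n => lam (A.orderEmbOfFin hA i)) i j := by
      ext i j
      have hlt : ((eLow n i : {i : Fin (2*n) // i.val < n}) : Fin (2*n)).val < n := i.isLt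
      have hmem : σ ((eLow n i) : Fin (2 * n)) ∈ A := by
        rw [hσ, sigmaPerm_coe, sigmaSet_mem hA]; exact i.isLt
      have hval : σ ((eLow n i) : Fin (2 * n)) = A.orderEmbOfFin hA i := by
        rw [hσ, sigmaPerm_coe, sigmaSet_lt hA hlt]
        exact congrArg _ (Fin.ext rfl)
      have hjlt : ((eLow n j : {i : Fin (2*n) // i.val < n}) : Fin (2*n)).val < n := j.isLt
      show M' ((eLow n i) : Fin (2*n)) ((eLow n j) : Fin (2*n)) = _
      have hent : M' ((eLow n i) : Fin (2*n)) ((eLow n j) : Fin (2*n))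
          = if σ ((eLow n i) : Fin (2*n)) ∈ S
              then lam (σ ((eLow n i) : Fin (2*n))) ^ (((eLow n j) : Fin (2*n)).val)
              else -(lam (σ ((eLow n i) : Fin (2*n))) ^ (((eLow n j) : Fin (2*n)).val)) := by
        simp only [hM', Matrix.submatrix_apply, id_eq, PS, Matrix.of_apply]
        rw [if_pos hjlt, if_pos hmem]
      rw [hent, hval]
      have hjv : (((eLow n j) : Fin (2*n)).val) = j.val := rfl
      rw [hjv]
      simp only [Matrix.of_apply]
      by_cases hiS : A.orderEmbOfFin hA i ∈ S
      · rw [if_pos hiS, if_pos hiS]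
        show _ = 1 * _
        rw [one_mul]
        rfl
      · rw [if_neg hiS, if_neg hiS]
        show _ = (-1) * _
        have : (Matrix.vandermonde fun i : Fin n => lam (A.orderEmbOfFin hA i)) i j
            = lam (A.orderEmbOfFin hA i) ^ j.val := rfl
        rw [this]
        ring
    rw [heq, Matrix.det_mul_column, prod_eps hA hSA, ← vdm_eq_det lam A hA]
  have hb2 : (M'.toSquareBlockProp fun i => ¬ i.val < n).det = vdm lam Aᶜ := by
    rw [← Matrix.det_submatrix_equiv_self (eHigh n), vdm_eq_det lam Aᶜ (card_compl_eq A hA)]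
    congr 1
    ext i j
    have hge : ¬ ((eHigh n i : {i : Fin (2*n) // ¬ i.val < n}) : Fin (2*n)).val < n := by
      simp [eHigh]
    have hmem : σ ((eHigh n i) : Fin (2 * n)) ∉ A := fun h => hge ((sigmaSet_mem hA).mp h)
    have hval : σ ((eHigh n i) : Fin (2 * n)) = Aᶜ.orderEmbOfFin (card_compl_eq A hA) i := by
      rw [hσ, sigmaPerm_coe, sigmaSet_ge hA hge]
      refine congrArg _ (Fin.ext ?_)
      show ((eHigh n i : {i : Fin (2*n) // ¬ i.val < n}) : Fin (2*n)).val - n = i.val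
      simp [eHigh]
    have hjge : ¬ ((eHigh n j : {i : Fin (2*n) // ¬ i.val < n}) : Fin (2*n)).val < n := by
      simp [eHigh]
    show M' ((eHigh n i) : Fin (2*n)) ((eHigh n j) : Fin (2*n)) = _
    have hent : M' ((eHigh n i) : Fin (2*n)) ((eHigh n j) : Fin (2*n))
        = lam (σ ((eHigh n i) : Fin (2*n))) ^ ((((eHigh n j) : Fin (2*n)).val) - n) := by
      simp only [hM', Matrix.submatrix_apply, id_eq, PS, Matrix.of_apply]
      rw [if_neg hjge, if_neg (by tauto)]
    rw [hent, hval]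
    have : ((eHigh n j : {i : Fin (2*n) // ¬ i.val < n}) : Fin (2*n)).val - n = j.val := by
      simp [eHigh]
    rw [this]
    rfl
  have hsign : invSign (sigmaSet n A) = ((Equiv.Perm.sign σ : ℤ) : ℝ) := by
    rw [← sigmaPerm_coe hA, ← hσ, invSign_eq_sign]
  have hsq : ((Equiv.Perm.sign σ : ℤ) : ℝ) * ((Equiv.Perm.sign σ : ℤ) : ℝ) = 1 := by
    rcases Int.units_eq_one_or (Equiv.Perm.sign σ) with h | h <;> rw [h] <;> norm_num
  have hfin := hperm
  rw [htri, hb1, hb2] at hfin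
  rw [hsign]
  linear_combination (-((Equiv.Perm.sign σ : ℤ) : ℝ)) * hfin - (PS n lam A S).det * hsq


theorem statement16 (n : ℕ) (hn : 1 ≤ n) (lam : Fin (2 * n) → ℝ)
    (hlam : Function.Injective lam)
    (a : ℕ) (ha : a ≤ n) (A : Finset (Fin (2 * n))) (hA : A.card = n)
    (S : Finset (Fin (2 * n))) (hSA : S ⊆ A) (hS : S.card = a) :
    (-1 : ℝ) ^ (n - a) * (vdm lam A * vdm lam Aᶜ) =
      invSign (sigmaSet n A) *
        ∑ B ∈ (Finset.powersetCard n (Finset.univ : Finset (Fin (2 * n)))).filter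
            (fun B => A ∩ B = S),
          invSign (sigmaSet n B) * (vdm lam B * vdm lam Bᶜ) := by
  classical
  subst hS
  have hsum : ∑ B ∈ (Finset.powersetCard n (Finset.univ : Finset (Fin (2 * n)))).filter
        (fun B => A ∩ B = S),
      invSign (sigmaSet n B) * (vdm lam B * vdm lam Bᶜ) = (MS n lam A S).det := by
    have h1 : ∀ B ∈ (Finset.powersetCard n (Finset.univ : Finset (Fin (2 * n)))).filter
        (fun B => A ∩ B = S),
        invSign (sigmaSet n B) * (vdm lam B * vdm lam Bᶜ) = (NB n lam B).det := by
      intro B hB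
      rw [Finset.mem_filter, Finset.mem_powersetCard_univ] at hB
      rw [det_NB lam B hB.1]
    rw [Finset.sum_congr rfl h1, det_MS_sum n lam A S hSA]
    refine Finset.sum_subset ?_ ?_
    · intro B hB
      rw [Finset.mem_filter, Finset.mem_powersetCard_univ] at hB
      rw [Finset.mem_filter]
      exact ⟨Finset.mem_univ _, hB.2⟩
    · intro B hB hnB
      rw [Finset.mem_filter] at hB
      have hcard : B.card ≠ n := by
        intro hc
        exact hnB (Finset.mem_filter.mpr ⟨Finset.mem_powersetCard_univ.mpr hc, hB.2⟩)
      exact det_NB_ne lam B hcard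
  have hdetMS : (MS n lam A S).det
      = invSign (sigmaSet n A) * ((-1) ^ (n - S.card) * (vdm lam A * vdm lam Aᶜ)) := by
    have hcol : (MS n lam A S).det = (PS n lam A S).det := by
      rw [← MS_mul_eq_PS lam A S hSA, Matrix.det_mul, Matrix.det_mul, det_U1 hn, det_U2 hn]
      ring
    rw [hcol, det_PS lam A S hA hSA]
  rw [hsum, hdetMS]
  have hsq : invSign (sigmaSet n A) * invSign (sigmaSet n A) = 1 := by
    unfold invSign
    rw [← pow_add]
    exact Even.neg_one_pow ⟨_, rfl⟩
  linear_combination (-((-1:ℝ) ^ (n - S.card) * vdm lam A * vdm lam Aᶜ)) * hsq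
end

section
/- Let n ≥ 1, let λ_1,…,λ_{2n} be real numbers, and let A ⊆ {1,…,2n} with |A| = n. Then Δ(λ) = (−1)ⁿ · sgn(σ_A) · Δ(A) Δ(A') Θ(A, A'), where Δ(λ) = ∏_{1 ≤ i < j ≤ 2n} (λ_j − λ_i), A' is the complement of A in {1,…,2n}, and Θ(A, A') = ∏_{s ∈ A} ∏_{t ∈ A'} (λ_s − λ_t). -/
open scoped BigOperators

lemma kth_eq_s17 {N n : ℕ} (A : Finset (Fin N)) (hA : A.card = n) (d : Fin N) (a : ℕ)
    (ha : a < n) : kth A d a = A.orderEmbOfFin hA ⟨a, ha⟩ := by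
  have hlen : a < (A.sort (· ≤ ·)).length := by simp [hA, ha]
  rw [kth, List.getD_eq_getElem _ _ hlen, Finset.orderEmbOfFin_apply]; rfl

lemma compl_card (n : ℕ) (A : Finset (Fin (2 * n))) (hA : A.card = n) : Aᶜ.card = n := by
  rw [Finset.card_compl, hA]; simp; omega

lemma sigma_lo (n : ℕ) (A : Finset (Fin (2 * n))) (hA : A.card = n) (k : Fin (2 * n))
    (hk : k.val < n) : sigmaSet n A k = A.orderEmbOfFin hA ⟨k.val, hk⟩ := by
  rw [sigmaSet, if_pos hk, kth_eq_s17 A hA]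

lemma sigma_hi (n : ℕ) (A : Finset (Fin (2 * n))) (hA : A.card = n) (k : Fin (2 * n))
    (hk : ¬ k.val < n) : sigmaSet n A k = Aᶜ.orderEmbOfFin (compl_card n A hA)
      ⟨k.val - n, by omega⟩ := by
  rw [sigmaSet, if_neg hk, kth_eq_s17 Aᶜ (compl_card n A hA)]

/-- an inversion pair must straddle the two halves -/
lemma inv_straddle (n : ℕ) (A : Finset (Fin (2 * n))) (hA : A.card = n)
    (p : Fin (2 * n) × Fin (2 * n)) (h12 : p.1 < p.2)
    (hf : sigmaSet n A p.2 < sigmaSet n A p.1) : p.1.val < n ∧ ¬ p.2.val < n := by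
  have h12' : p.1.val < p.2.val := h12
  by_cases h1 : p.1.val < n
  · by_cases h2 : p.2.val < n
    · exfalso
      rw [sigma_lo n A hA p.1 h1, sigma_lo n A hA p.2 h2] at hf
      exact absurd ((A.orderEmbOfFin hA).strictMono (show (⟨p.1.val, h1⟩ : Fin n) < ⟨p.2.val, h2⟩ from h12')) (not_lt.2 hf.le)
    · exact ⟨h1, h2⟩
  · exfalso
    have h2 : ¬ p.2.val < n := by omega
    rw [sigma_hi n A hA p.1 h1, sigma_hi n A hA p.2 h2] at hf
    have : (⟨p.1.val - n, by omega⟩ : Fin n) < ⟨p.2.val - n, by omega⟩ := by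
      show p.1.val - n < p.2.val - n; omega
    exact absurd ((Aᶜ.orderEmbOfFin (compl_card n A hA)).strictMono this) (not_lt.2 hf.le)

lemma inv_count (n : ℕ) (A : Finset (Fin (2 * n))) (hA : A.card = n) :
    (Finset.univ.filter fun p : Fin (2 * n) × Fin (2 * n) =>
        p.1 < p.2 ∧ sigmaSet n A p.2 < sigmaSet n A p.1).card =
      ((A ×ˢ Aᶜ).filter fun p => p.2 < p.1).card := by
  have hAc := compl_card n A hA
  apply Finset.card_nbij (fun p => (sigmaSet n A p.1, sigmaSet n A p.2))
  · intro p hp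
    simp only [Finset.mem_coe, Finset.mem_filter, Finset.mem_univ, true_and] at hp
    obtain ⟨h12, hf⟩ := hp
    obtain ⟨h1, h2⟩ := inv_straddle n A hA p h12 hf
    simp only [Finset.mem_coe, Finset.mem_filter, Finset.mem_product]
    refine ⟨⟨?_, ?_⟩, hf⟩
    · rw [sigma_lo n A hA p.1 h1]; exact Finset.orderEmbOfFin_mem A hA _
    · rw [sigma_hi n A hA p.2 h2]; exact Finset.orderEmbOfFin_mem Aᶜ hAc _
  · intro p hp q hq hpq
    simp only [Finset.coe_filter, Set.mem_setOf_eq, Finset.mem_univ, true_and] at hp hq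
    obtain ⟨hp1, hp2⟩ := inv_straddle n A hA p hp.1 hp.2
    obtain ⟨hq1, hq2⟩ := inv_straddle n A hA q hq.1 hq.2
    have e1 : sigmaSet n A p.1 = sigmaSet n A q.1 := congrArg Prod.fst hpq
    have e2 : sigmaSet n A p.2 = sigmaSet n A q.2 := congrArg Prod.snd hpq
    rw [sigma_lo n A hA p.1 hp1, sigma_lo n A hA q.1 hq1] at e1
    rw [sigma_hi n A hA p.2 hp2, sigma_hi n A hA q.2 hq2] at e2
    have e1' := (A.orderEmbOfFin hA).injective e1
    have e2' := (Aᶜ.orderEmbOfFin hAc).injective e2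
    have v1 : p.1.val = q.1.val := by simpa using e1'
    have v2 : p.2.val - n = q.2.val - n := by simpa using e2'
    have : p.1 = q.1 := Fin.ext v1
    have : p.2 = q.2 := Fin.ext (by omega)
    exact Prod.ext (Fin.ext v1) this
  · intro q hq
    simp only [Finset.coe_filter, Set.mem_setOf_eq, Finset.mem_product] at hq
    obtain ⟨⟨hs, ht⟩, hlt⟩ := hq
    set a := (A.orderIsoOfFin hA).symm ⟨q.1, hs⟩ with ha
    set b := (Aᶜ.orderIsoOfFin hAc).symm ⟨q.2, ht⟩ with hb
    have han : a.val < n := a.isLt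
    have hbn : b.val < n := b.isLt
    refine ⟨(⟨a.val, by omega⟩, ⟨n + b.val, by omega⟩), ?_, ?_⟩
    · have f1 : sigmaSet n A ⟨a.val, by omega⟩ = q.1 := by
        rw [sigma_lo n A hA _ han]
        have : (⟨a.val, han⟩ : Fin n) = a := rfl
        rw [this, ← Finset.coe_orderIsoOfFin_apply, ha, OrderIso.apply_symm_apply]
      have f2 : sigmaSet n A ⟨n + b.val, by omega⟩ = q.2 := by
        rw [sigma_hi n A hA _ (by simp)]
        have : (⟨n + b.val - n, by omega⟩ : Fin n) = b := by
          apply Fin.ext; show n + b.val - n = b.val; omega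
        rw [this, ← Finset.coe_orderIsoOfFin_apply, hb, OrderIso.apply_symm_apply]
      simp only [Finset.coe_filter, Set.mem_setOf_eq, Finset.mem_univ, true_and]
      constructor
      · show (⟨a.val, by omega⟩ : Fin (2*n)) < ⟨n + b.val, by omega⟩
        show a.val < n + b.val; omega
      · rw [f1, f2]; exact hlt
    · have f1 : sigmaSet n A ⟨a.val, by omega⟩ = q.1 := by
        rw [sigma_lo n A hA _ han]
        have : (⟨a.val, han⟩ : Fin n) = a := rfl
        rw [this, ← Finset.coe_orderIsoOfFin_apply, ha, OrderIso.apply_symm_apply]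
      have f2 : sigmaSet n A ⟨n + b.val, by omega⟩ = q.2 := by
        rw [sigma_hi n A hA _ (by simp)]
        have : (⟨n + b.val - n, by omega⟩ : Fin n) = b := by
          apply Fin.ext; show n + b.val - n = b.val; omega
        rw [this, ← Finset.coe_orderIsoOfFin_apply, hb, OrderIso.apply_symm_apply]
      simp [f1, f2]


theorem prod_split (n : ℕ) (lam : Fin (2 * n) → ℝ) (A : Finset (Fin (2 * n))) :
    vdm lam Finset.univ = vdm lam A * vdm lam Aᶜ *
      ((∏ p ∈ (A ×ˢ Aᶜ).filter fun p => p.1 < p.2, (lam p.2 - lam p.1)) *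
       (∏ p ∈ (Aᶜ ×ˢ A).filter fun p => p.1 < p.2, (lam p.2 - lam p.1))) := by
  set g : Fin (2*n) × Fin (2*n) → ℝ := fun p => lam p.2 - lam p.1 with hg
  set T := (Finset.univ ×ˢ Finset.univ).filter fun p : Fin (2*n) × Fin (2*n) => p.1 < p.2 with hT
  have h1 : vdm lam Finset.univ = ∏ p ∈ T, g p := rfl
  rw [h1, ← Finset.prod_filter_mul_prod_filter_not T (fun p => p.1 ∈ A) g]
  rw [← Finset.prod_filter_mul_prod_filter_not (T.filter fun p => p.1 ∈ A) (fun p => p.2 ∈ A) g]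
  rw [← Finset.prod_filter_mul_prod_filter_not (T.filter fun p => ¬ p.1 ∈ A) (fun p => p.2 ∈ A) g]
  have e1 : ((T.filter fun p => p.1 ∈ A).filter fun p => p.2 ∈ A)
      = (A ×ˢ A).filter fun p => p.1 < p.2 := by
    ext p; simp [hT]; tauto
  have e2 : ((T.filter fun p => p.1 ∈ A).filter fun p => ¬ p.2 ∈ A)
      = (A ×ˢ Aᶜ).filter fun p => p.1 < p.2 := by
    ext p; simp [hT]; tauto
  have e3 : ((T.filter fun p => ¬ p.1 ∈ A).filter fun p => p.2 ∈ A)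
      = (Aᶜ ×ˢ A).filter fun p => p.1 < p.2 := by
    ext p; simp [hT]; tauto
  have e4 : ((T.filter fun p => ¬ p.1 ∈ A).filter fun p => ¬ p.2 ∈ A)
      = (Aᶜ ×ˢ Aᶜ).filter fun p => p.1 < p.2 := by
    ext p; simp [hT]; tauto
  rw [e1, e2, e3, e4]
  show vdm lam A * (∏ p ∈ _, g p) * ((∏ p ∈ _, g p) * vdm lam Aᶜ) = _
  ring

theorem theta_split (n : ℕ) (lam : Fin (2 * n) → ℝ) (A : Finset (Fin (2 * n))) :
    (∏ s ∈ A, ∏ t ∈ Aᶜ, (lam s - lam t)) =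
      (-1 : ℝ) ^ (((A ×ˢ Aᶜ).filter fun p => p.1 < p.2).card) *
      ((∏ p ∈ (A ×ˢ Aᶜ).filter fun p => p.1 < p.2, (lam p.2 - lam p.1)) *
       (∏ p ∈ (Aᶜ ×ˢ A).filter fun p => p.1 < p.2, (lam p.2 - lam p.1))) := by
  rw [show (∏ s ∈ A, ∏ t ∈ Aᶜ, (lam s - lam t)) = ∏ p ∈ A ×ˢ Aᶜ, (lam p.1 - lam p.2) from (Finset.prod_product (s := A) (t := Aᶜ) (f := fun p => lam p.1 - lam p.2)).symm]
  rw [← Finset.prod_filter_mul_prod_filter_not (A ×ˢ Aᶜ) (fun p => p.1 < p.2)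
    (fun p => lam p.1 - lam p.2)]
  have h1 : (∏ p ∈ (A ×ˢ Aᶜ).filter fun p => p.1 < p.2, (lam p.1 - lam p.2))
      = (-1 : ℝ) ^ (((A ×ˢ Aᶜ).filter fun p => p.1 < p.2).card) *
        ∏ p ∈ (A ×ˢ Aᶜ).filter fun p => p.1 < p.2, (lam p.2 - lam p.1) := by
    rw [← Finset.prod_const, ← Finset.prod_mul_distrib]
    apply Finset.prod_congr rfl
    intro p _; ring
  have h2 : (∏ p ∈ (A ×ˢ Aᶜ).filter fun p => ¬ p.1 < p.2, (lam p.1 - lam p.2))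
      = ∏ p ∈ (Aᶜ ×ˢ A).filter fun p => p.1 < p.2, (lam p.2 - lam p.1) := by
    apply Finset.prod_nbij' (fun p => (p.2, p.1)) (fun p => (p.2, p.1))
    · intro p hp
      simp only [Finset.mem_filter, Finset.mem_product, Finset.mem_compl] at hp ⊢
      have hne : p.1 ≠ p.2 := by
        intro h; exact hp.1.2 (h ▸ hp.1.1)
      exact ⟨⟨hp.1.2, hp.1.1⟩, lt_of_le_of_ne (not_lt.mp hp.2) (Ne.symm hne)⟩
    · intro p hp
      simp only [Finset.mem_filter, Finset.mem_product, Finset.mem_compl] at hp ⊢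
      exact ⟨⟨hp.1.2, hp.1.1⟩, not_lt.mpr hp.2.le⟩
    · intro p _; rfl
    · intro p _; rfl
    · intro p _; rfl
  rw [h1, h2]; ring

theorem card_sum (n : ℕ) (A : Finset (Fin (2 * n))) (hA : A.card = n) (hAc : Aᶜ.card = n) :
    (((A ×ˢ Aᶜ).filter fun p => p.1 < p.2).card) +
      (((A ×ˢ Aᶜ).filter fun p => p.2 < p.1).card) = n * n := by
  have : ((A ×ˢ Aᶜ).filter fun p => p.2 < p.1)
      = (A ×ˢ Aᶜ).filter fun p => ¬ p.1 < p.2 := by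
    ext p
    simp only [Finset.mem_filter, Finset.mem_product, Finset.mem_compl, and_congr_right_iff]
    intro h
    constructor
    · intro h'; exact not_lt.mpr h'.le
    · intro h'
      have hne : p.1 ≠ p.2 := fun he => h.2 (he ▸ h.1)
      exact lt_of_le_of_ne (not_lt.mp h') (Ne.symm hne)
  rw [this, Finset.card_filter_add_card_filter_not, Finset.card_product, hA, hAc]

theorem statement17 (n : ℕ) (hn : 1 ≤ n) (lam : Fin (2 * n) → ℝ)
    (A : Finset (Fin (2 * n))) (hA : A.card = n) :
    vdm lam Finset.univ =
      (-1 : ℝ) ^ n * invSign (sigmaSet n A) *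
        (vdm lam A * vdm lam Aᶜ * ∏ s ∈ A, ∏ t ∈ Aᶜ, (lam s - lam t)) := by
  have hAc := compl_card n A hA
  set c := ((A ×ˢ Aᶜ).filter fun p => p.1 < p.2).card with hc
  set c' := ((A ×ˢ Aᶜ).filter fun p => p.2 < p.1).card with hc'
  have hInv : invSign (sigmaSet n A) = (-1 : ℝ) ^ c' := by
    rw [invSign, inv_count n A hA]
  have key : ((-1 : ℝ) ^ n * (-1) ^ c') * (-1) ^ c = 1 := by
    rw [← pow_add, ← pow_add]
    apply Even.neg_one_pow
    have hsum : c + c' = n * n := card_sum n A hA hAc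
    have : n + c' + c = n * (n + 1) := by rw [Nat.mul_add, Nat.mul_one]; omega
    rw [this]
    exact Nat.even_mul_succ_self n
  rw [prod_split n lam A, hInv, theta_split n lam A, ← hc]
  linear_combination (-(vdm lam A * vdm lam Aᶜ) *
    ((∏ p ∈ (A ×ˢ Aᶜ).filter fun p => p.1 < p.2, (lam p.2 - lam p.1)) *
     (∏ p ∈ (Aᶜ ×ˢ A).filter fun p => p.1 < p.2, (lam p.2 - lam p.1)))) * key
end

section
/- Let n ≥ 1, let λ_1,…,λ_{2n} be distinct real numbers, and let σ, τ be two distinct permutations of {1,…,n}. Then Σ_f ∏_{i=1}^n [ 1/((λ_{f(i)} − λ_{g(σ(i))}) · (λ_{f(i)} − λ_{g(τ(i))})) ] = 0, where the sum is over all ways to choose 2n distinct values f(1),…,f(n), g(1),…,g(n) with {f(1),…,f(n), g(1),…,g(n)} = {1,…,2n} (equivalently, over all bijections from the disjoint union {1,…,n} ⊔ {1,…,n} onto {1,…,2n}, with f the restriction to the first copy and g the restriction to the second copy). -/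
open scoped BigOperators
open Finset Polynomial

namespace St18

/-- insert `c` at position 0 of an arrangement -/
def extE {k : ℕ} {γ : Type*} [DecidableEq γ] (c : γ) (w : Fin k ≃ {d : γ // d ≠ c}) :
    Fin (k + 1) ≃ γ :=
  (finSuccEquiv k).trans (w.optionCongr.trans (Equiv.optionSubtypeNe c))

@[simp] lemma extE_zero {k : ℕ} {γ : Type*} [DecidableEq γ] (c : γ)
    (w : Fin k ≃ {d : γ // d ≠ c}) : extE c w 0 = c := by
  simp [extE]

@[simp] lemma extE_succ {k : ℕ} {γ : Type*} [DecidableEq γ] (c : γ)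
    (w : Fin k ≃ {d : γ // d ≠ c}) (t : Fin k) : extE c w t.succ = (w t : γ) := by
  simp [extE]

lemma extE_eq_iff {k : ℕ} {γ : Type*} [DecidableEq γ] (c : γ)
    (w : Fin k ≃ {d : γ // d ≠ c}) (s : Fin (k+1)) : extE c w s = c ↔ s = 0 := by
  constructor
  · intro h
    induction s using Fin.cases with
    | zero => rfl
    | succ t => rw [extE_succ] at h; exact absurd h (w t).2
  · rintro rfl; simp

lemma card_ne {γ : Type*} [Fintype γ] [DecidableEq γ] (c : γ) :
    Fintype.card {d : γ // d ≠ c} = Fintype.card γ - 1 := by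
  classical
  have h1 : Fintype.card {d : γ // d = c} = 1 := Fintype.card_subtype_eq c
  have := Fintype.card_subtype_compl (fun d : γ => d = c)
  rw [h1] at this
  simpa using this

lemma sum_peel {k : ℕ} {γ : Type*} [Fintype γ] [DecidableEq γ] (hc : Fintype.card γ = k + 1)
    (F : (Fin (k + 1) ≃ γ) → ℝ) :
    ∑ w : Fin (k + 1) ≃ γ, F w
      = ∑ c : γ, ∑ w' : Fin k ≃ {d : γ // d ≠ c}, F (extE c w') := by
  classical
  have hcc : ∀ c : γ, Fintype.card {d : γ // d ≠ c} = k := by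
    intro c; rw [card_ne c, hc]; omega
  let Ψ : (Σ c : γ, Fin k ≃ {d : γ // d ≠ c}) → (Fin (k+1) ≃ γ) := fun p => extE p.1 p.2
  have hinj : Function.Injective Ψ := by
    rintro ⟨c, w⟩ ⟨c', w'⟩ h
    have hc0 : c = c' := by
      have := congrArg (fun u : Fin (k+1) ≃ γ => u 0) h
      simpa [Ψ] using this
    subst hc0
    have hw : w = w' := by
      ext t
      have := congrArg (fun u : Fin (k+1) ≃ γ => u t.succ) h
      simpa [Ψ, Subtype.ext_iff] using this
    rw [hw]
  have hcards : Fintype.card (Σ c : γ, Fin k ≃ {d : γ // d ≠ c})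
      = Fintype.card (Fin (k+1) ≃ γ) := by
    rw [Fintype.card_sigma]
    have h1 : ∀ c : γ, Fintype.card (Fin k ≃ {d : γ // d ≠ c}) = Nat.factorial k := by
      intro c
      rw [Fintype.card_equiv (Fintype.equivOfCardEq (by simp [hcc c]))]
      simp
    simp only [h1]
    rw [Finset.sum_const, Fintype.card_equiv (Fintype.equivOfCardEq (by simp [hc]))]
    simp [hc, Nat.factorial_succ, mul_comm]
  have hbij : Function.Bijective Ψ :=
    (Fintype.bijective_iff_injective_and_card Ψ).mpr ⟨hinj, hcards⟩
  rw [← Fintype.sum_bijective Ψ hbij (fun p => F (Ψ p)) F (fun p => rfl)]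
  exact Finset.sum_sigma univ (fun c => univ) (fun p => F (Ψ p))

lemma lagr {γ : Type*} [Fintype γ] [DecidableEq γ] (y : γ → ℝ) (hy : Function.Injective y)
    (a b : ℝ) (k : ℕ) (hk : k < Fintype.card γ) :
    ∑ c : γ, (y c - b) ^ k * ∏ d ∈ univ.erase c, ((y c - y d)⁻¹ * (a - y d)) = (a - b) ^ k := by
  classical
  have hdeg : (((X : ℝ[X]) - C b) ^ k).degree < (univ : Finset γ).card := by
    rw [Polynomial.degree_pow, Polynomial.degree_X_sub_C, Finset.card_univ]
    simpa using (by exact_mod_cast hk : (k : WithBot ℕ) < (Fintype.card γ : WithBot ℕ))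
  have h := Lagrange.eq_interpolate (s := (univ : Finset γ)) (v := y)
      (f := ((X : ℝ[X]) - C b) ^ k) (hy.injOn) hdeg
  have h2 := congrArg (Polynomial.eval a) h
  rw [Lagrange.interpolate_apply] at h2
  rw [Polynomial.eval_finset_sum] at h2
  simp only [Polynomial.eval_mul, Polynomial.eval_C, Polynomial.eval_pow, Polynomial.eval_sub,
    Polynomial.eval_X, Lagrange.basis, Polynomial.eval_prod, Lagrange.basisDivisor] at h2
  simpa using h2.symm

lemma res {γ : Type*} [Fintype γ] [DecidableEq γ] (y : γ → ℝ) (hy : Function.Injective y)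
    (a : ℝ) (k : ℕ) (hk : k + 2 ≤ Fintype.card γ) :
    ∑ c : γ, (y c - a) ^ k * ∏ d ∈ univ.erase c, (y c - y d)⁻¹ = 0 := by
  classical
  set N := Fintype.card γ with hN
  have hdeg : (((X : ℝ[X]) - C a) ^ k).degree < (univ : Finset γ).card := by
    rw [Polynomial.degree_pow, Polynomial.degree_X_sub_C, Finset.card_univ, ← hN]
    simpa using (by exact_mod_cast (by omega : k < N) : (k : WithBot ℕ) < (N : WithBot ℕ))
  have h := Lagrange.eq_interpolate (s := (univ : Finset γ)) (v := y)
      (f := ((X : ℝ[X]) - C a) ^ k) (hy.injOn) hdeg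
  have h2 := congrArg (fun p : ℝ[X] => p.coeff (N - 1)) h
  have hz : (((X : ℝ[X]) - C a) ^ k).coeff (N - 1) = 0 := by
    apply Polynomial.coeff_eq_zero_of_degree_lt
    rw [Polynomial.degree_pow, Polynomial.degree_X_sub_C]
    simpa using (by exact_mod_cast (by omega : k < N - 1) : (k : WithBot ℕ) < ((N-1 : ℕ) : WithBot ℕ))
  rw [hz, Lagrange.interpolate_apply] at h2
  rw [Polynomial.finset_sum_coeff] at h2
  have hb : ∀ c : γ, (C ((((X : ℝ[X]) - C a) ^ k).eval (y c)) * Lagrange.basis univ y c).coeff (N-1)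
      = (y c - a) ^ k * ∏ d ∈ univ.erase c, (y c - y d)⁻¹ := by
    intro c
    rw [Polynomial.coeff_C_mul]
    have hbasis : Lagrange.basis univ y c
        = C (∏ d ∈ univ.erase c, (y c - y d)⁻¹) * ∏ d ∈ univ.erase c, (X - C (y d)) := by
      rw [Lagrange.basis, map_prod, ← Finset.prod_mul_distrib]
      rfl
    have hmon : (∏ d ∈ univ.erase c, ((X : ℝ[X]) - C (y d))).Monic :=
      monic_prod_of_monic _ _ (fun d _ => monic_X_sub_C (y d))
    have hdeg2 : (∏ d ∈ univ.erase c, ((X : ℝ[X]) - C (y d))).natDegree = N - 1 := by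
      rw [Polynomial.natDegree_prod_of_monic _ _ (fun d _ => monic_X_sub_C (y d))]
      simp [Finset.card_erase_of_mem, hN]
    rw [hbasis, Polynomial.coeff_C_mul, ← hdeg2, hmon.coeff_natDegree]
    simp [mul_comm]
  rw [Finset.sum_congr rfl (fun c _ => hb c)] at h2
  exact h2.symm

/-- product along a path from `a` to `b` through the arrangement `w` -/
noncomputable def PW {m : ℕ} {γ : Type*} (a b : ℝ) (y : γ → ℝ) (w : Fin (m+1) → γ) : ℝ :=
  (a - y (w 0))⁻¹ * (∏ t : Fin m, (y (w t.castSucc) - y (w t.succ))⁻¹)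
    * (y (w (Fin.last m)) - b)⁻¹

lemma PW_extE {m : ℕ} {γ : Type*} [DecidableEq γ] (a b : ℝ) (y : γ → ℝ) (c : γ)
    (w : Fin (m+1) ≃ {d : γ // d ≠ c}) :
    PW a b y (⇑(extE c w)) = (a - y c)⁻¹ * PW (y c) b (fun d : {d : γ // d ≠ c} => y d) ⇑w := by
  unfold PW
  have h0 : extE c w 0 = c := extE_zero c w
  have hmid : ∏ t : Fin (m+1), (y (extE c w t.castSucc) - y (extE c w t.succ))⁻¹
      = (y c - y (w 0))⁻¹ * ∏ t : Fin m, (y ((w t.castSucc : {d : γ // d ≠ c}) : γ)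
          - y ((w t.succ : {d : γ // d ≠ c}) : γ))⁻¹ := by
    rw [Fin.prod_univ_succ, Fin.castSucc_zero, extE_zero, extE_succ]
    refine congrArg _ (Finset.prod_congr rfl (fun t _ => ?_))
    rw [← Fin.succ_castSucc, extE_succ, extE_succ]
  have hlast : extE c w (Fin.last (m+1)) = ((w (Fin.last m) : {d : γ // d ≠ c}) : γ) := by
    rw [← Fin.succ_last, extE_succ]
  rw [h0, hmid, hlast]
  ring

lemma Wthm : ∀ (m : ℕ) (γ : Type) (_ : Fintype γ) (_ : DecidableEq γ),
    Fintype.card γ = m + 1 → ∀ (y : γ → ℝ), Function.Injective y → ∀ (a b : ℝ),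
    (∀ c, y c ≠ a) → (∀ c, y c ≠ b) → a ≠ b →
    ∑ w : Fin (m+1) ≃ γ, PW a b y ⇑w
      = (a - b) ^ m * ∏ c : γ, ((a - y c) * (y c - b))⁻¹ := by
  intro m
  induction m with
  | zero =>
    intro γ _ _ hc y hy a b ha hb hab
    obtain ⟨c₀, hc₀⟩ := Fintype.card_eq_one_iff.mp hc
    have w₀ : Fin 1 ≃ γ := Fintype.equivOfCardEq (by simp [hc])
    rw [Fintype.sum_eq_single w₀ (fun w hw => by
      exact absurd (by ext t; rw [hc₀ (w t), hc₀ (w₀ t)] : w = w₀) hw)]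
    unfold PW
    rw [Finset.prod_eq_single c₀ (fun d _ hd => absurd (hc₀ d) hd) (by simp)]
    rw [hc₀ (w₀ 0), hc₀ (w₀ (Fin.last 0))]
    simp [mul_inv, mul_comm]
  | succ m ih =>
    intro γ _ _ hc y hy a b ha hb hab
    classical
    rw [sum_peel hc]
    have hsubc : ∀ c : γ, Fintype.card {d : γ // d ≠ c} = m + 1 := by
      intro c; rw [card_ne c, hc]; omega
    have hinner : ∀ c : γ, ∑ w' : Fin (m+1) ≃ {d : γ // d ≠ c}, PW a b y ⇑(extE c w')
        = (a - y c)⁻¹ * ((y c - b) ^ m *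
            ∏ d ∈ univ.erase c, ((y c - y d) * (y d - b))⁻¹) := by
      intro c
      have hy' : Function.Injective (fun d : {d : γ // d ≠ c} => y ↑d) :=
        fun d d' h => Subtype.ext (hy h)
      have hstep := ih {d : γ // d ≠ c} inferInstance inferInstance (hsubc c)
        (fun d => y ↑d) hy' (y c) b
        (fun d => fun h => d.2 (hy h)) (fun d => hb ↑d) (hb c)
      calc ∑ w' : Fin (m+1) ≃ {d : γ // d ≠ c}, PW a b y ⇑(extE c w')
          = ∑ w' : Fin (m+1) ≃ {d : γ // d ≠ c},
              (a - y c)⁻¹ * PW (y c) b (fun d : {d : γ // d ≠ c} => y ↑d) ⇑w' := by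
            exact Finset.sum_congr rfl (fun w' _ => PW_extE a b y c w')
        _ = (a - y c)⁻¹ * ∑ w' : Fin (m+1) ≃ {d : γ // d ≠ c},
              PW (y c) b (fun d : {d : γ // d ≠ c} => y ↑d) ⇑w' := by
            rw [Finset.mul_sum]
        _ = (a - y c)⁻¹ * ((y c - b) ^ m * ∏ d : {d : γ // d ≠ c}, ((y c - y ↑d) * (y ↑d - b))⁻¹) := by
            rw [hstep]
        _ = (a - y c)⁻¹ * ((y c - b) ^ m * ∏ d ∈ univ.erase c, ((y c - y d) * (y d - b))⁻¹) := by
            congr 1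
            congr 1
            exact (Finset.prod_subtype (p := fun d => d ≠ c) (univ.erase c)
              (fun d => by simp [Finset.mem_erase])
              (fun d => ((y c - y d) * (y d - b))⁻¹)).symm
    rw [Finset.sum_congr rfl (fun c _ => hinner c)]
    have hbc : ∀ c : γ, y c - b ≠ 0 := fun c => sub_ne_zero_of_ne (hb c)
    have hac : ∀ c : γ, a - y c ≠ 0 := fun c => sub_ne_zero_of_ne (fun h => ha c h.symm)
    set A := ∏ c : γ, (a - y c) with hA
    set P := ∏ c : γ, (y c - b)⁻¹ with hP
    have hAne : A ≠ 0 := Finset.prod_ne_zero_iff.mpr (fun c _ => hac c)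
    have hterm : ∀ c : γ,
        (a - y c)⁻¹ * ((y c - b) ^ m * ∏ d ∈ univ.erase c, ((y c - y d) * (y d - b))⁻¹)
        = P * ((y c - b) ^ (m+1) * ((a - y c)⁻¹ * ∏ d ∈ univ.erase c, (y c - y d)⁻¹)) := by
      intro c
      have h2 : ∏ d ∈ univ.erase c, ((y c - y d) * (y d - b))⁻¹
          = (∏ d ∈ univ.erase c, (y c - y d)⁻¹) * ∏ d ∈ univ.erase c, (y d - b)⁻¹ := by
        rw [← Finset.prod_mul_distrib]
        exact Finset.prod_congr rfl (fun d _ => mul_inv _ _)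
      have h3 := Finset.prod_erase_mul univ (fun d => (y d - b)⁻¹) (Finset.mem_univ c)
      have h4 : ∏ d ∈ univ.erase c, (y d - b)⁻¹ = P * (y c - b) := by
        rw [hP, ← h3, mul_assoc, inv_mul_cancel₀ (hbc c), mul_one]
      rw [h2, h4]; ring
    rw [Finset.sum_congr rfl (fun c _ => hterm c), ← Finset.mul_sum]
    have hlag := lagr y hy a b (m+1) (by rw [hc]; omega)
    have hlag2 : ∀ c : γ, (y c - b) ^ (m+1) * ∏ d ∈ univ.erase c, ((y c - y d)⁻¹ * (a - y d))
        = A * ((y c - b) ^ (m+1) * ((a - y c)⁻¹ * ∏ d ∈ univ.erase c, (y c - y d)⁻¹)) := by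
      intro c
      have h3 := Finset.prod_erase_mul univ (fun d => (a - y d)) (Finset.mem_univ c)
      have h4 : ∏ d ∈ univ.erase c, (a - y d) = A * (a - y c)⁻¹ := by
        rw [hA, ← h3, mul_assoc, mul_inv_cancel₀ (hac c), mul_one]
      rw [Finset.prod_mul_distrib, h4]; ring
    rw [Finset.sum_congr rfl (fun c _ => hlag2 c), ← Finset.mul_sum] at hlag
    have hS : ∑ c : γ, (y c - b) ^ (m+1) * ((a - y c)⁻¹ * ∏ d ∈ univ.erase c, (y c - y d)⁻¹)
        = A⁻¹ * (a - b) ^ (m+1) := by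
      rw [← hlag, ← mul_assoc, inv_mul_cancel₀ hAne, one_mul]
    rw [hS]
    have hRHS : ∏ c : γ, ((a - y c) * (y c - b))⁻¹ = A⁻¹ * P := by
      calc ∏ c : γ, ((a - y c) * (y c - b))⁻¹
          = ∏ c : γ, ((a - y c)⁻¹ * (y c - b)⁻¹) :=
            Finset.prod_congr rfl (fun c _ => mul_inv _ _)
        _ = (∏ c : γ, (a - y c)⁻¹) * P := Finset.prod_mul_distrib
        _ = A⁻¹ * P := by rw [Finset.prod_inv_distrib]
    rw [hRHS]
    ring

noncomputable def QC {L : ℕ} {β : Type*} (x : β → ℝ) (v : Fin L → β) : ℝ :=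
  ∏ t : Fin L, (x (v t) - x (v (finRotate L t)))⁻¹

lemma cycf (M : ℕ) (β : Type) [Fintype β] [DecidableEq β] (hcard : Fintype.card β = M + 3)
    (x : β → ℝ) (hx : Function.Injective x) :
    ∑ u : Fin (M+3) ≃ β, QC x ⇑u = 0 := by
  classical
  obtain ⟨d₀⟩ : Nonempty β := Fintype.card_pos_iff.mp (by omega)
  have hQ : ∀ v : Fin (M+3) → β, QC x v = ∏ t : Fin (M+3), (x (v t) - x (v (t + 1)))⁻¹ := by
    intro v; unfold QC
    exact Finset.prod_congr rfl (fun t _ => by rw [finRotate_succ_apply])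
  set β' := {d : β // d ≠ d₀} with hβ'
  have hcβ' : Fintype.card β' = M + 2 := by
    show Fintype.card {d : β // d ≠ d₀} = M + 2
    rw [card_ne, hcard]
    omega
  set a := x d₀ with ha
  set y' : β' → ℝ := fun d => x ↑d with hy'
  have hy'inj : Function.Injective y' := fun d d' h => Subtype.ext (hx h)
  have hy'ne : ∀ d : β', y' d ≠ a := fun d h => d.2 (hx h)
  -- step 1 : rotation decomposition
  let Ψ : Fin (M+3) × (Fin (M+2) ≃ β') → (Fin (M+3) ≃ β) :=
    fun p => (Equiv.subRight p.1).trans (extE d₀ p.2)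
  have hΨapp : ∀ p w s, Ψ (p, w) s = extE d₀ w (s - p) := fun p w s => rfl
  have hinjΨ : Function.Injective Ψ := by
    rintro ⟨p, w⟩ ⟨p', w'⟩ h
    have h0 : ∀ s, extE d₀ w (s - p) = extE d₀ w' (s - p') :=
      fun s => by rw [← hΨapp p w s, ← hΨapp p' w' s, h]
    have hp : p = p' := by
      have h1 := h0 p
      rw [sub_self, extE_zero] at h1
      have h2 := (extE_eq_iff d₀ w' (p - p')).mp h1.symm
      have h3 : p - p' = 0 := h2
      have := sub_eq_zero.mp h3
      exact this
    subst hp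
    have hw : w = w' := by
      ext t
      have h1 := h0 (t.succ + p)
      rw [add_sub_cancel_right, extE_succ, extE_succ] at h1
      exact h1
    rw [hw]
  have hcardΨ : Fintype.card (Fin (M+3) × (Fin (M+2) ≃ β'))
      = Fintype.card (Fin (M+3) ≃ β) := by
    rw [Fintype.card_prod, Fintype.card_fin,
      Fintype.card_equiv (Fintype.equivOfCardEq (by rw [hcβ']; simp) : Fin (M+2) ≃ β'),
      Fintype.card_equiv (Fintype.equivOfCardEq (by rw [hcard]; simp) : Fin (M+3) ≃ β)]
    simp [Nat.factorial_succ]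
  have hrot : ∀ (p : Fin (M+3)) (w : Fin (M+2) ≃ β'),
      QC x ⇑(Ψ (p, w)) = QC x ⇑(extE d₀ w) := by
    intro p w
    rw [hQ, hQ]
    rw [← Equiv.prod_comp (Equiv.subRight p)
      (fun t => (x (extE d₀ w t) - x (extE d₀ w (t+1)))⁻¹)]
    apply Finset.prod_congr rfl
    intro t _
    rw [hΨapp, hΨapp]
    simp only [Equiv.subRight_apply]
    rw [sub_add_eq_add_sub]
  have hsum1 : ∑ u : Fin (M+3) ≃ β, QC x ⇑u
      = ∑ p : Fin (M+3), ∑ w : Fin (M+2) ≃ β', QC x ⇑(extE d₀ w) := by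
    rw [← Fintype.sum_bijective Ψ
      ((Fintype.bijective_iff_injective_and_card Ψ).mpr ⟨hinjΨ, hcardΨ⟩)
      (fun pw => QC x ⇑(Ψ pw)) (fun u => QC x ⇑u) (fun pw => rfl)]
    rw [Fintype.sum_prod_type]
    exact Finset.sum_congr rfl (fun p _ => Finset.sum_congr rfl (fun w _ => hrot p w))
  rw [hsum1]
  -- step 2 : the closed-cycle product as a path product
  have hQE : ∀ w : Fin (M+2) ≃ β', QC x ⇑(extE d₀ w) = PW a a y' ⇑w := by
    intro w
    rw [hQ]
    have e1 : (0 : Fin (M+3)) + 1 = (0 : Fin (M+2)).succ := by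
      ext; simp [Fin.add_def]
    have e2 : ∀ r : Fin (M+1), ((r.castSucc : Fin (M+2)).succ : Fin (M+3)) + 1
        = ((r.succ : Fin (M+2)).succ : Fin (M+3)) := by
      intro r
      ext
      simp [Fin.add_def]
      exact Nat.le_of_lt_succ r.isLt
    have e3 : ((Fin.last (M+1)).succ : Fin (M+3)) + 1 = 0 := by
      rw [Fin.succ_last, Fin.last_add_one]
    calc ∏ t : Fin (M+3), (x (extE d₀ w t) - x (extE d₀ w (t+1)))⁻¹
        = (x (extE d₀ w 0) - x (extE d₀ w (0+1)))⁻¹ *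
          ((∏ r : Fin (M+1), (x (extE d₀ w (r.castSucc).succ)
              - x (extE d₀ w ((r.castSucc).succ + 1)))⁻¹) *
           (x (extE d₀ w (Fin.last (M+1)).succ)
              - x (extE d₀ w ((Fin.last (M+1)).succ + 1)))⁻¹) := by
          rw [Fin.prod_univ_succ, Fin.prod_univ_castSucc]
      _ = (x d₀ - x ↑(w 0))⁻¹ * ((∏ r : Fin (M+1), (x ↑(w r.castSucc) - x ↑(w r.succ))⁻¹) *
           (x ↑(w (Fin.last (M+1))) - x d₀)⁻¹) := by
          rw [e1, e3, extE_zero, extE_succ]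
          congr 2
          exact Finset.prod_congr rfl (fun r _ => by rw [e2, extE_succ, extE_succ])
      _ = PW a a y' ⇑w := by unfold PW; simp only [hy', ha]; ring
  rw [Finset.sum_congr rfl (fun p _ => Finset.sum_congr rfl (fun w _ => hQE w))]
  -- step 3 : peel and apply Wthm and res
  have hVS : ∑ w : Fin (M+2) ≃ β', PW a a y' ⇑w = 0 := by
    rw [sum_peel hcβ']
    have hinner : ∀ c : β', ∑ w' : Fin (M+1) ≃ {d : β' // d ≠ c}, PW a a y' ⇑(extE c w')
        = (a - y' c)⁻¹ * ((y' c - a) ^ M *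
            ∏ d ∈ univ.erase c, ((y' c - y' d) * (y' d - a))⁻¹) := by
      intro c
      have hcc : Fintype.card {d : β' // d ≠ c} = M + 1 := by rw [card_ne, hcβ']; omega
      have hy''inj : Function.Injective (fun d : {d : β' // d ≠ c} => y' ↑d) :=
        fun d d' h => Subtype.ext (hy'inj h)
      have hstep := Wthm M {d : β' // d ≠ c} inferInstance inferInstance hcc
        (fun d => y' ↑d) hy''inj (y' c) a
        (fun d h => d.2 (hy'inj h)) (fun d => hy'ne ↑d) (hy'ne c)
      calc ∑ w' : Fin (M+1) ≃ {d : β' // d ≠ c}, PW a a y' ⇑(extE c w')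
          = ∑ w' : Fin (M+1) ≃ {d : β' // d ≠ c},
              (a - y' c)⁻¹ * PW (y' c) a (fun d : {d : β' // d ≠ c} => y' ↑d) ⇑w' :=
            Finset.sum_congr rfl (fun w' _ => PW_extE a a y' c w')
        _ = (a - y' c)⁻¹ * ∑ w' : Fin (M+1) ≃ {d : β' // d ≠ c},
              PW (y' c) a (fun d : {d : β' // d ≠ c} => y' ↑d) ⇑w' := by rw [Finset.mul_sum]
        _ = (a - y' c)⁻¹ * ((y' c - a) ^ M *
              ∏ d : {d : β' // d ≠ c}, ((y' c - y' ↑d) * (y' ↑d - a))⁻¹) := by rw [hstep]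
        _ = (a - y' c)⁻¹ * ((y' c - a) ^ M *
              ∏ d ∈ univ.erase c, ((y' c - y' d) * (y' d - a))⁻¹) := by
            congr 2
            exact (Finset.prod_subtype (p := fun d => d ≠ c) (univ.erase c)
              (fun d => by simp [Finset.mem_erase])
              (fun d => ((y' c - y' d) * (y' d - a))⁻¹)).symm
    rw [Finset.sum_congr rfl (fun c _ => hinner c)]
    set P' := ∏ d : β', (y' d - a)⁻¹ with hP'
    have hterm : ∀ c : β',
        (a - y' c)⁻¹ * ((y' c - a) ^ M *
            ∏ d ∈ univ.erase c, ((y' c - y' d) * (y' d - a))⁻¹)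
        = -P' * ((y' c - a) ^ M * ∏ d ∈ univ.erase c, (y' c - y' d)⁻¹) := by
      intro c
      have hca : y' c - a ≠ 0 := sub_ne_zero_of_ne (hy'ne c)
      have h2 : ∏ d ∈ univ.erase c, ((y' c - y' d) * (y' d - a))⁻¹
          = (∏ d ∈ univ.erase c, (y' c - y' d)⁻¹) * ∏ d ∈ univ.erase c, (y' d - a)⁻¹ := by
        rw [← Finset.prod_mul_distrib]
        exact Finset.prod_congr rfl (fun d _ => mul_inv _ _)
      have h3 := Finset.prod_erase_mul univ (fun d : β' => (y' d - a)⁻¹) (Finset.mem_univ c)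
      have h4 : ∏ d ∈ univ.erase c, (y' d - a)⁻¹ = P' * (y' c - a) := by
        rw [hP', ← h3, mul_assoc, inv_mul_cancel₀ hca, mul_one]
      have h5 : (a - y' c)⁻¹ * (y' c - a) = -1 := by
        rw [← neg_sub (y' c) a, inv_neg, neg_mul, inv_mul_cancel₀ hca]
      calc (a - y' c)⁻¹ * ((y' c - a) ^ M *
              ∏ d ∈ univ.erase c, ((y' c - y' d) * (y' d - a))⁻¹)
          = ((a - y' c)⁻¹ * (y' c - a)) *
              (P' * ((y' c - a) ^ M * ∏ d ∈ univ.erase c, (y' c - y' d)⁻¹)) := by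
            rw [h2, h4]; ring
        _ = -P' * ((y' c - a) ^ M * ∏ d ∈ univ.erase c, (y' c - y' d)⁻¹) := by
            rw [h5]; ring
    rw [Finset.sum_congr rfl (fun c _ => hterm c), ← Finset.mul_sum]
    rw [res y' hy'inj a M (by rw [hcβ'])]
    ring
  rw [Finset.sum_congr rfl (fun p _ => hVS)]
  simp

end St18

/-- The sum is over all bijections `e` from `{1,…,n} ⊔ {1,…,n}` onto `{1,…,2n}`; `f` is
the restriction of `e` to the first copy and `g` the restriction to the second copy. -/
theorem statement18 (n : ℕ) (hn : 1 ≤ n) (lam : Fin (2 * n) → ℝ)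
    (hlam : Function.Injective lam)
    (σ τ : Equiv.Perm (Fin n)) (hστ : σ ≠ τ) :
    ∑ e : (Fin n ⊕ Fin n) ≃ Fin (2 * n), ∏ i : Fin n,
      1 / ((lam (e (Sum.inl i)) - lam (e (Sum.inr (σ i)))) *
        (lam (e (Sum.inl i)) - lam (e (Sum.inr (τ i))))) = 0 := by
  classical
  set θ : Equiv.Perm (Fin n ⊕ Fin n) :=
    { toFun := Sum.elim (fun i => Sum.inr (σ i)) (fun j => Sum.inl (τ.symm j))
      invFun := Sum.elim (fun i => Sum.inr (τ i)) (fun j => Sum.inl (σ.symm j))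
      left_inv := by rintro (i|j) <;> simp
      right_inv := by rintro (i|j) <;> simp } with hθ
  have hθl : ∀ i, θ (Sum.inl i) = Sum.inr (σ i) := fun i => rfl
  have hθr : ∀ j, θ (Sum.inr j) = Sum.inl (τ.symm j) := fun j => rfl
  set G : ((Fin n ⊕ Fin n) ≃ Fin (2*n)) → ℝ :=
    fun e => ∏ s : Fin n ⊕ Fin n, (lam (e s) - lam (e (θ s)))⁻¹ with hG
  have hGsum : ∑ e : (Fin n ⊕ Fin n) ≃ Fin (2*n), G e = 0 := by
    obtain ⟨i₀, hi₀⟩ : ∃ i, σ i ≠ τ i := by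
      by_contra h; push_neg at h; exact hστ (Equiv.ext h)
    set s₀ : Fin n ⊕ Fin n := Sum.inl i₀ with hs₀
    set L := Function.minimalPeriod ⇑θ s₀ with hLdef
    have hper : Function.IsPeriodicPt ⇑θ (orderOf θ) s₀ := by
      show (⇑θ)^[orderOf θ] s₀ = s₀
      rw [Equiv.Perm.iterate_eq_pow, pow_orderOf_eq_one]
      rfl
    have hLpos : 0 < L :=
      Function.minimalPeriod_pos_of_mem_periodicPts
        (Function.mk_mem_periodicPts (orderOf_pos θ) hper)
    have hL1 : θ s₀ ≠ s₀ := by rw [hs₀, hθl]; simp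
    have hL2 : θ (θ s₀) ≠ s₀ := by
      rw [hs₀, hθl, hθr]
      simp only [ne_eq, Sum.inl.injEq]
      intro h
      exact hi₀ (by simpa using congrArg τ h)
    have hL3 : 3 ≤ L := by
      by_contra hcon
      push_neg at hcon
      have hit : (⇑θ)^[L] s₀ = s₀ := Function.iterate_minimalPeriod
      rcases (by omega : L = 1 ∨ L = 2) with h'|h'
      · rw [h'] at hit; simp at hit; exact hL1 hit
      · rw [h'] at hit
        simp [Function.iterate_succ_apply'] at hit
        exact hL2 hit
    obtain ⟨M, hM⟩ : ∃ M, L = M + 3 := ⟨L - 3, by omega⟩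
    set E : Fin (M+3) → (Fin n ⊕ Fin n) := fun t => (⇑θ)^[t.val] s₀ with hE
    have hEinj : Function.Injective E := by
      have key : ∀ u u' : Fin (M+3), u.val ≤ u'.val → E u = E u' → u = u' := by
        intro u u' hle heq
        by_contra hne
        have hlt : u.val < u'.val := lt_of_le_of_ne hle (fun hv => hne (Fin.ext hv))
        have h1 : (⇑θ)^[u.val] ((⇑θ)^[u'.val - u.val] s₀) = (⇑θ)^[u.val] s₀ := by
          rw [← Function.iterate_add_apply]
          rw [(by omega : u.val + (u'.val - u.val) = u'.val)]
          exact heq.symm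
        have h2 : (⇑θ)^[u'.val - u.val] s₀ = s₀ :=
          (Function.Injective.iterate θ.injective u.val) h1
        have h4 := Function.IsPeriodicPt.minimalPeriod_le (by omega) h2
        rw [← hLdef] at h4
        have := u'.isLt
        omega
      intro t t' h
      rcases le_total t.val t'.val with hle | hle
      · exact key t t' hle h
      · exact (key t' t hle h.symm).symm
    have hstep : ∀ t : Fin (M+3), θ (E t) = E (t + 1) := by
      intro t
      have h1 : θ (E t) = (⇑θ)^[t.val + 1] s₀ := (Function.iterate_succ_apply' ⇑θ t.val s₀).symm
      rw [h1]
      by_cases hlt : t.val + 1 < M + 3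
      · have h2 : ((t + 1 : Fin (M+3))).val = t.val + 1 := by
          rw [Fin.val_add, Fin.val_one]
          exact Nat.mod_eq_of_lt hlt
        show (⇑θ)^[t.val + 1] s₀ = (⇑θ)^[((t+1 : Fin (M+3))).val] s₀
        rw [h2]
      · have ht : t.val = M + 2 := by have := t.isLt; omega
        have h2 : ((t + 1 : Fin (M+3))).val = 0 := by
          rw [Fin.val_add, Fin.val_one, ht]
          simp
        show (⇑θ)^[t.val + 1] s₀ = (⇑θ)^[((t+1 : Fin (M+3))).val] s₀
        rw [h2, ht]
        have hit : (⇑θ)^[L] s₀ = s₀ := Function.iterate_minimalPeriod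
        rw [hM] at hit
        rw [hit]
        rfl
    set C : Finset (Fin n ⊕ Fin n) := Finset.image E univ with hC
    have hmemC : ∀ t, E t ∈ C := fun t => by
      rw [hC]; exact Finset.mem_image_of_mem E (Finset.mem_univ t)
    have hCcard : C.card = M + 3 := by
      rw [hC, Finset.card_image_of_injective _ hEinj]
      simp
    have hCclosed' : ∀ s, θ s ∈ C → s ∈ C := by
      intro s hs
      rw [hC] at hs
      obtain ⟨t, _, ht⟩ := Finset.mem_image.mp hs
      have h1 : θ (E (t - 1)) = E t := by rw [hstep (t-1), sub_add_cancel]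
      have h2 : s = E (t - 1) := θ.injective (ht.symm.trans h1.symm)
      rw [h2]; exact hmemC (t-1)
    have h2npos : 0 < 2 * n := by omega
    set z₀ : Fin (2*n) := ⟨0, h2npos⟩ with hz₀
    set res : ((Fin n ⊕ Fin n) ≃ Fin (2*n)) → ((Fin n ⊕ Fin n) → Fin (2*n)) :=
      fun e s => if s ∈ C then z₀ else e s with hres
    rw [← Finset.sum_fiberwise_of_maps_to (g := res)
      (t := (univ : Finset ((Fin n ⊕ Fin n) → Fin (2*n)))) (fun e _ => Finset.mem_univ _) G]
    apply Finset.sum_eq_zero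
    intro y _
    rcases Finset.eq_empty_or_nonempty (univ.filter (fun e => res e = y)) with hemp | hne
    · rw [hemp, Finset.sum_empty]
    obtain ⟨e₀, he₀⟩ := hne
    have hagree : ∀ e, e ∈ univ.filter (fun e => res e = y) → ∀ s, s ∉ C → e s = e₀ s := by
      intro e he s hs
      have h1 : res e = res e₀ := by
        rw [(Finset.mem_filter.mp he).2, (Finset.mem_filter.mp he₀).2]
      have h2 := congrFun h1 s
      rw [hres] at h2
      simpa [hs] using h2
    have hsplit : ∀ e ∈ univ.filter (fun e => res e = y),
        G e = (∏ s ∈ C, (lam (e s) - lam (e (θ s)))⁻¹) *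
          (∏ s ∈ Cᶜ, (lam (e₀ s) - lam (e₀ (θ s)))⁻¹) := by
      intro e he
      simp only [hG]
      rw [← Finset.prod_mul_prod_compl C (fun s => (lam (e s) - lam (e (θ s)))⁻¹)]
      congr 1
      apply Finset.prod_congr rfl
      intro s hs
      have hs' : s ∉ C := by simpa using hs
      rw [hagree e he s hs', hagree e he (θ s) (fun h => hs' (hCclosed' s h))]
    rw [Finset.sum_congr rfl hsplit, ← Finset.sum_mul]
    have hinner : ∑ e ∈ univ.filter (fun e => res e = y),
        ∏ s ∈ C, (lam (e s) - lam (e (θ s)))⁻¹ = 0 := by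
      set R : Finset (Fin (2*n)) := C.image e₀ with hR
      have hRcard : R.card = M + 3 := by
        rw [hR, Finset.card_image_of_injective _ e₀.injective, hCcard]
      have hβtcard : Fintype.card {v : Fin (2*n) // v ∈ R} = M + 3 := by
        rw [Fintype.card_coe, hRcard]
      set x : {v : Fin (2*n) // v ∈ R} → ℝ := fun v => lam ↑v with hx
      have hxinj : Function.Injective x := fun v v' h => Subtype.ext (hlam h)
      have hECbij : Function.Bijective
          (fun t : Fin (M+3) => (⟨E t, hmemC t⟩ : {s // s ∈ C})) := by
        rw [Fintype.bijective_iff_injective_and_card]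
        constructor
        · intro t t' h
          exact hEinj (congrArg Subtype.val h)
        · rw [Fintype.card_coe, hCcard, Fintype.card_fin]
      set EC := Equiv.ofBijective _ hECbij with hEC
      have hECsymm : ∀ (t : Fin (M+3)) (h : E t ∈ C), EC.symm ⟨E t, h⟩ = t := by
        intro t h
        have h5 : EC t = ⟨E t, h⟩ := rfl
        rw [← h5, Equiv.symm_apply_apply]
      have hmemR : ∀ e, e ∈ univ.filter (fun e => res e = y) → ∀ t, e (E t) ∈ R := by
        intro e he t
        by_cases h1 : e₀.symm (e (E t)) ∈ C
        · rw [hR]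
          exact Finset.mem_image.mpr ⟨e₀.symm (e (E t)), h1, by simp⟩
        · exfalso
          have h2 : e (e₀.symm (e (E t))) = e₀ (e₀.symm (e (E t))) := hagree e he _ h1
          rw [Equiv.apply_symm_apply] at h2
          have h3 : e₀.symm (e (E t)) = E t := e.injective h2
          exact h1 (by rw [h3]; exact hmemC t)
      have hUbij : ∀ (e : (Fin n ⊕ Fin n) ≃ Fin (2*n))
          (he : e ∈ univ.filter (fun e => res e = y)),
          Function.Bijective (fun t : Fin (M+3) =>
            (⟨e (E t), hmemR e he t⟩ : {v : Fin (2*n) // v ∈ R})) := by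
        intro e he
        rw [Fintype.bijective_iff_injective_and_card]
        constructor
        · intro t t' h
          exact hEinj (e.injective (congrArg Subtype.val h))
        · rw [hβtcard, Fintype.card_fin]
      have hToEfun : ∀ u : Fin (M+3) ≃ {v : Fin (2*n) // v ∈ R},
          Function.Bijective (fun s => if h : s ∈ C
            then (↑(u (EC.symm ⟨s, h⟩)) : Fin (2*n)) else e₀ s) := by
        intro u
        rw [Fintype.bijective_iff_injective_and_card]
        constructor
        · intro s s' h
          simp only at h
          by_cases h1 : s ∈ C <;> by_cases h2 : s' ∈ C
          · rw [dif_pos h1, dif_pos h2] at h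
            have h3 := EC.symm.injective (u.injective (Subtype.ext h))
            have h4 : (⟨s, h1⟩ : {s // s ∈ C}) = ⟨s', h2⟩ := h3
            exact congrArg Subtype.val h4
          · exfalso
            rw [dif_pos h1, dif_neg h2] at h
            have hv : e₀ s' ∈ R := h ▸ (u (EC.symm ⟨s,h1⟩)).2
            rw [hR] at hv
            obtain ⟨c, hc1, hc2⟩ := Finset.mem_image.mp hv
            exact h2 ((e₀.injective hc2) ▸ hc1)
          · exfalso
            rw [dif_neg h1, dif_pos h2] at h
            have hv : e₀ s ∈ R := h.symm ▸ (u (EC.symm ⟨s',h2⟩)).2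
            rw [hR] at hv
            obtain ⟨c, hc1, hc2⟩ := Finset.mem_image.mp hv
            exact h1 ((e₀.injective hc2) ▸ hc1)
          · rw [dif_neg h1, dif_neg h2] at h
            exact e₀.injective h
        · simp only [Fintype.card_sum, Fintype.card_fin]
          omega
      refine (Finset.sum_bij' (fun e he => Equiv.ofBijective _ (hUbij e he))
        (fun u _ => Equiv.ofBijective _ (hToEfun u)) (fun e he => Finset.mem_univ _)
        ?_ ?_ ?_ ?_).trans
          (St18.cycf M {v : Fin (2*n) // v ∈ R} hβtcard x hxinj)
      · -- hj : j u ∈ filter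
        intro u _
        rw [Finset.mem_filter]
        refine ⟨Finset.mem_univ _, ?_⟩
        have hy0 : res e₀ = y := (Finset.mem_filter.mp he₀).2
        funext s
        rw [← hy0]
        by_cases h1 : s ∈ C
        · rw [hres]; simp only [h1, if_true]
        · rw [hres]; simp only [h1, if_false]
          show (if h : s ∈ C then (↑(u (EC.symm ⟨s, h⟩)) : Fin (2*n)) else e₀ s) = e₀ s
          rw [dif_neg h1]
      · -- left inverse
        intro e he
        apply Equiv.ext
        intro s
        show (if h : s ∈ C then
            (↑((Equiv.ofBijective _ (hUbij e he)) (EC.symm ⟨s, h⟩)) : Fin (2*n))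
          else e₀ s) = e s
        by_cases h1 : s ∈ C
        · rw [dif_pos h1]
          show e (E (EC.symm ⟨s, h1⟩)) = e s
          congr 1
          have h2 : EC (EC.symm ⟨s, h1⟩) = ⟨s, h1⟩ := Equiv.apply_symm_apply _ _
          exact congrArg Subtype.val h2
        · rw [dif_neg h1]
          exact (hagree e he s h1).symm
      · -- right inverse
        intro u hu
        apply Equiv.ext
        intro t
        apply Subtype.ext
        show (if h : E t ∈ C then (↑(u (EC.symm ⟨E t, h⟩)) : Fin (2*n)) else e₀ (E t)) = ↑(u t)
        rw [dif_pos (hmemC t), hECsymm t (hmemC t)]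
      · -- values
        intro e he
        have h1 : ∏ s ∈ C, (lam (e s) - lam (e (θ s)))⁻¹
            = ∏ t : Fin (M+3), (lam (e (E t)) - lam (e (θ (E t))))⁻¹ := by
          rw [hC, Finset.prod_image (fun t _ t' _ h => hEinj h)]
        rw [h1]
        unfold St18.QC
        apply Finset.prod_congr rfl
        intro t _
        have h2 : finRotate (M+3) t = t + 1 := by rw [finRotate_succ_apply]
        rw [h2]
        show (lam (e (E t)) - lam (e (θ (E t))))⁻¹
          = (lam (e (E t)) - lam (e (E (t+1))))⁻¹
        rw [hstep t]
    rw [hinner, zero_mul]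
  have hrel : ∀ e : (Fin n ⊕ Fin n) ≃ Fin (2*n),
      G e = (-1)^n * ∏ i : Fin n,
        1 / ((lam (e (Sum.inl i)) - lam (e (Sum.inr (σ i)))) *
          (lam (e (Sum.inl i)) - lam (e (Sum.inr (τ i))))) := by
    intro e
    simp only [hG]
    rw [Fintype.prod_sum_type]
    have h0 : ∏ i : Fin n, (lam (e (Sum.inl i)) - lam (e (θ (Sum.inl i))))⁻¹
        = ∏ i : Fin n, (lam (e (Sum.inl i)) - lam (e (Sum.inr (σ i))))⁻¹ :=
      Finset.prod_congr rfl (fun i _ => by rw [hθl])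
    have h1 : ∏ j : Fin n, (lam (e (Sum.inr j)) - lam (e (θ (Sum.inr j))))⁻¹
        = ∏ i : Fin n, (lam (e (Sum.inr (τ i))) - lam (e (Sum.inl i)))⁻¹ := by
      rw [← Equiv.prod_comp τ (fun j => (lam (e (Sum.inr j)) - lam (e (θ (Sum.inr j))))⁻¹)]
      apply Finset.prod_congr rfl
      intro i _
      rw [hθr]
      simp
    have h2 : ∏ i : Fin n, (lam (e (Sum.inr (τ i))) - lam (e (Sum.inl i)))⁻¹
        = (-1)^n * ∏ i : Fin n, (lam (e (Sum.inl i)) - lam (e (Sum.inr (τ i))))⁻¹ := by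
      rw [show ((-1:ℝ))^n = ∏ _i : Fin n, (-1 : ℝ) by simp, ← Finset.prod_mul_distrib]
      apply Finset.prod_congr rfl
      intro i _
      rw [← neg_sub (lam (e (Sum.inl i))), inv_neg]
      ring
    have h3 : ∏ i : Fin n, 1 / ((lam (e (Sum.inl i)) - lam (e (Sum.inr (σ i)))) *
          (lam (e (Sum.inl i)) - lam (e (Sum.inr (τ i)))))
        = (∏ i : Fin n, (lam (e (Sum.inl i)) - lam (e (Sum.inr (σ i))))⁻¹) *
          (∏ i : Fin n, (lam (e (Sum.inl i)) - lam (e (Sum.inr (τ i))))⁻¹) := by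
      rw [← Finset.prod_mul_distrib]
      apply Finset.prod_congr rfl
      intro i _
      rw [one_div, mul_inv]
    rw [h0, h1, h2, h3]
    ring
  have h4 : ∑ e : (Fin n ⊕ Fin n) ≃ Fin (2*n), G e
      = (-1)^n * ∑ e : (Fin n ⊕ Fin n) ≃ Fin (2*n), ∏ i : Fin n,
          1 / ((lam (e (Sum.inl i)) - lam (e (Sum.inr (σ i)))) *
            (lam (e (Sum.inl i)) - lam (e (Sum.inr (τ i))))) := by
    rw [Finset.mul_sum]
    exact Finset.sum_congr rfl (fun e _ => hrel e)
  have h5 := hGsum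
  rw [h4] at h5
  exact (mul_eq_zero.mp h5).resolve_left (pow_ne_zero n (by norm_num))
end
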